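/- arXiv:1605.06425 — 11 statements merged into one kernel-verified Lean document; each statement's English description precedes it below -/
import Mathlib

section
/- Let R be a nontrivial idempotent semiring. Then R is simple if and only if for every nonzero x ∈ R there exists y ∈ R with 1 ≤ x·y (in the canonical order). -/
/-- Let `R` be a nontrivial idempotent (commutative) semiring.  `R` is
simple (its only saturated ideals are `{0}` and `R`) if and only if for every nonzero
`x ∈ R` there exists `y ∈ R` with `1 ≤ x * y` in the canonical order (`a ≤ b ↔ a + b = b`). -/
theorem statement0 {R : Type*} [CommSemiring R] [Nontrivial R]
    (hidem : ∀ x : R, x + x = x) :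
    (∀ I : Set R,
        0 ∈ I →
        (∀ a b, a ∈ I → b ∈ I → a + b ∈ I) →
        (∀ r a, a ∈ I → r * a ∈ I) →
        (∀ a b, a + b = b → b ∈ I → a ∈ I) →
        I = {0} ∨ I = Set.univ) ↔
      ∀ x : R, x ≠ 0 → ∃ y : R, 1 + x * y = x * y := by
  constructor
  · intro hsimple x hx
    set I : Set R := {a | ∃ y : R, a + x * y = x * y} with hI
    have h0 : (0 : R) ∈ I := ⟨0, by simp⟩
    have hadd : ∀ a b, a ∈ I → b ∈ I → a + b ∈ I := by
      rintro a b ⟨y1, h1⟩ ⟨y2, h2⟩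
      exact ⟨y1 + y2, by rw [mul_add]; calc a + b + (x * y1 + x * y2)
            = (a + x * y1) + (b + x * y2) := by ring
          _ = x * y1 + x * y2 := by rw [h1, h2]⟩
    have hmul : ∀ r a, a ∈ I → r * a ∈ I := by
      rintro r a ⟨y, h⟩
      exact ⟨r * y, by calc r * a + x * (r * y) = r * (a + x * y) := by ring
        _ = r * (x * y) := by rw [h]
        _ = x * (r * y) := by ring⟩
    have hsat : ∀ a b, a + b = b → b ∈ I → a ∈ I := by
      rintro a b hab ⟨y, h⟩
      exact ⟨y, by calc a + x * y = a + (b + x * y) := by rw [h]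
        _ = (a + b) + x * y := by ring
        _ = b + x * y := by rw [hab]
        _ = x * y := h⟩
    have hxI : x ∈ I := ⟨1, by rw [mul_one]; exact hidem x⟩
    rcases hsimple I h0 hadd hmul hsat with h | h
    · rw [h] at hxI; exact absurd hxI hx
    · have : (1 : R) ∈ I := h ▸ Set.mem_univ 1
      exact this
  · intro hinv I h0 hadd hmul hsat
    by_cases h : I = {0}
    · exact Or.inl h
    · right
      have : ∃ x ∈ I, x ≠ 0 := by
        by_contra hc
        push_neg at hc
        exact h (Set.eq_singleton_iff_unique_mem.2 ⟨h0, fun a ha => hc a ha⟩)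
      obtain ⟨x, hxI, hx⟩ := this
      obtain ⟨y, hy⟩ := hinv x hx
      have hxy : x * y ∈ I := by rw [mul_comm]; exact hmul y x hxI
      have h1 : (1 : R) ∈ I := hsat 1 (x * y) hy hxy
      ext r
      simp only [Set.mem_univ, iff_true]
      have := hmul r 1 h1
      rwa [mul_one] at this
end

section
/- Every unitgenerated idempotent semiring is simple. -/
/-- Every unitgenerated idempotent (commutative) semiring is simple:
if every element of `R` is a finite sum of multiplicative units, then every saturated
ideal of `R` is `{0}` or all of `R`. -/
theorem statement1 {R : Type*} [CommSemiring R]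
    (hidem : ∀ x : R, x + x = x)
    (hug : ∀ x : R, ∃ (n : ℕ) (u : Fin n → Rˣ), x = ∑ i, (u i : R)) :
    ∀ I : Set R,
      0 ∈ I →
      (∀ a b, a ∈ I → b ∈ I → a + b ∈ I) →
      (∀ r a, a ∈ I → r * a ∈ I) →
      (∀ a b, a + b = b → b ∈ I → a ∈ I) →
      I = {0} ∨ I = Set.univ := by
  intro I h0 _hadd hmul hsat
  by_cases h : I = {0}
  · exact Or.inl h
  · right
    -- there is a nonzero element a ∈ I
    obtain ⟨a, haI, ha0⟩ : ∃ a ∈ I, a ≠ 0 := by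
      by_contra hc
      push_neg at hc
      apply h
      ext x
      simp only [Set.mem_singleton_iff]
      exact ⟨fun hx => hc x hx, fun hx => hx ▸ h0⟩
    obtain ⟨n, u, hu⟩ := hug a
    have hn : 0 < n := by
      rcases Nat.eq_zero_or_pos n with h0n | h
      · exfalso; apply ha0; rw [hu]; subst h0n; simp
      · exact h
    set i : Fin n := ⟨0, hn⟩
    -- u i + a = a
    have hle : (u i : R) + a = a := by
      rw [hu, ← Finset.add_sum_erase _ _ (Finset.mem_univ i), ← add_assoc,
        hidem ((u i : R))]
    have huI : (u i : R) ∈ I := hsat _ _ hle haI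
    have h1 : (1 : R) ∈ I := by
      have := hmul (((u i)⁻¹ : Rˣ) : R) _ huI
      rwa [Units.inv_mul] at this
    ext x
    simp only [Set.mem_univ, iff_true]
    have := hmul x 1 h1
    rwa [mul_one] at this
end

section
/- Let K be a unitgenerated idempotent semiring, Γ a linearly ordered abelian group, v : K → Γ_max a surjective homomorphism, and R = {x ∈ K | v(x) ≤ 1}. Then the map sending a saturated additive submonoid U ⊆ Γ_max to its preimage v⁻¹(U) is an inclusion-preserving bijection from the saturated additive submonoids of Γ_max onto the saturated R-submodules of K, with inverse sending a saturated R-submodule M ⊆ K to its image v(M). -/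
/-- A saturated additive submonoid of `Γ_max = WithZero Γ` (addition is `max`). -/
def IsSatSubmonoidMax {Γ : Type*} [CommGroup Γ] [LinearOrder Γ] [IsOrderedMonoid Γ] (U : Set (WithZero Γ)) : Prop :=
  0 ∈ U ∧ (∀ a b, a ∈ U → b ∈ U → max a b ∈ U) ∧ ∀ a b, a ≤ b → b ∈ U → a ∈ U

/-- A saturated `R`-submodule of `K`, where `R = {x ∈ K | v x ≤ 1}`:
an additive submonoid of `K`, closed under multiplication by elements of `R`,
and saturated for the canonical order `a ≤ b ↔ a + b = b`. -/
def IsSatRSubmodule {K : Type*} [CommSemiring K] {Γ : Type*} [CommGroup Γ] [LinearOrder Γ] [IsOrderedMonoid Γ]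
    (v : K → WithZero Γ) (M : Set K) : Prop :=
  0 ∈ M ∧ (∀ a b, a ∈ M → b ∈ M → a + b ∈ M) ∧
    (∀ r m, v r ≤ 1 → m ∈ M → r * m ∈ M) ∧
    ∀ a b, a + b = b → b ∈ M → a ∈ M



section Aux

variable {K : Type*} [CommSemiring K] {Γ : Type*} [CommGroup Γ] [LinearOrder Γ] [IsOrderedMonoid Γ]

lemma aux_term_add_sum (hidem : ∀ x : K, x + x = x) {ι : Type*} (s : Finset ι)
    (f : ι → K) {i : ι} (hi : i ∈ s) : f i + ∑ j ∈ s, f j = ∑ j ∈ s, f j := by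
  classical
  rw [← Finset.add_sum_erase s f hi, ← add_assoc, hidem]

lemma aux_vsum_le (v : K → WithZero Γ) (hv0 : v 0 = 0)
    (hvadd : ∀ x y, v (x + y) = max (v x) (v y))
    {ι : Type*} (s : Finset ι) (f : ι → K) {c : WithZero Γ}
    (h : ∀ j ∈ s, v (f j) ≤ c) : v (∑ j ∈ s, f j) ≤ c := by
  classical
  induction s using Finset.induction with
  | empty => simp [hv0]
  | insert a s hnot ih =>
    rw [Finset.sum_insert hnot, hvadd]
    exact max_le (h a (Finset.mem_insert_self a s))
      (ih fun j hj => h j (Finset.mem_insert_of_mem hj))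

lemma aux_key {v : K → WithZero Γ}
    (hidem : ∀ x : K, x + x = x)
    (hug : ∀ x : K, ∃ (n : ℕ) (u : Fin n → Kˣ), x = ∑ i, (u i : K))
    (hv0 : v 0 = 0) (hv1 : v 1 = 1)
    (hvmul : ∀ x y, v (x * y) = v x * v y)
    (hvadd : ∀ x y, v (x + y) = max (v x) (v y))
    {M : Set K} (hM : IsSatRSubmodule v M)
    {x m : K} (hm : m ∈ M) (hle : v x ≤ v m) : x ∈ M := by
  classical
  obtain ⟨n, u, rfl⟩ := hug x
  -- it suffices that each unit term is in M
  refine Finset.sum_induction _ (· ∈ M) (fun a b ha hb => hM.2.1 a b ha hb) hM.1 ?_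
  intro i _
  -- v (u i) ≤ v m
  have hterm : v ((u i : K)) ≤ v m := by
    have h1 : (u i : K) + ∑ j, (u j : K) = ∑ j, (u j : K) :=
      aux_term_add_sum hidem Finset.univ (fun j => ((u j : K))) (Finset.mem_univ i)
    have h2 : v ((u i : K)) ≤ v (∑ j, (u j : K)) := by
      calc v ((u i : K)) ≤ max (v (u i : K)) (v (∑ j, (u j : K))) := le_max_left _ _
        _ = v ((u i : K) + ∑ j, (u j : K)) := (hvadd _ _).symm
        _ = v (∑ j, (u j : K)) := by rw [h1]
    exact h2.trans hle
  have hune : v ((u i : K)) ≠ 0 := by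
    intro h0
    have : v ((u i : K)) * v ((↑(u i)⁻¹ : K)) = 1 := by
      rw [← hvmul]; rw [Units.mul_inv]; exact hv1
    rw [h0, zero_mul] at this
    exact zero_ne_one this
  -- decompose m into units
  obtain ⟨p, w, rfl⟩ := hug m
  rcases Nat.eq_zero_or_pos p with hp | hp
  · subst hp
    simp only [Finset.univ_eq_empty, Finset.sum_empty, hv0, le_zero_iff] at hterm
    exact absurd hterm hune
  · have hne : (Finset.univ : Finset (Fin p)).Nonempty := ⟨⟨0, hp⟩, Finset.mem_univ _⟩
    obtain ⟨k, -, hk⟩ := Finset.exists_max_image Finset.univ (fun j => v ((w j : K))) hne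
    have hmk : v (∑ j, (w j : K)) ≤ v ((w k : K)) :=
      aux_vsum_le v hv0 hvadd _ _ fun j _ => hk j (Finset.mem_univ j)
    have hwk : (w k : K) ∈ M :=
      hM.2.2.2 _ _ (aux_term_add_sum hidem Finset.univ (fun j => ((w j : K))) (Finset.mem_univ k)) hm
    have hinv : v ((w k : K)) * v ((↑(w k)⁻¹ : K)) = 1 := by
      rw [← hvmul, Units.mul_inv]; exact hv1
    have hr : v ((u i : K) * (↑(w k)⁻¹ : K)) ≤ 1 := by
      rw [hvmul]
      calc v ((u i : K)) * v ((↑(w k)⁻¹ : K))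
          ≤ v ((w k : K)) * v ((↑(w k)⁻¹ : K)) :=
            mul_le_mul_left (hterm.trans hmk) _
        _ = 1 := hinv
    have := hM.2.2.1 _ _ hr hwk
    have heq : ((u i : K) * (↑(w k)⁻¹ : K)) * (w k : K) = (u i : K) := by
      rw [mul_assoc, Units.inv_mul, mul_one]
    rwa [heq] at this

end Aux

/-- Let `K` be a unitgenerated idempotent semiring, `Γ` a linearly ordered
abelian group, `v : K → Γ_max` a surjective homomorphism, `R = {x ∈ K | v x ≤ 1}`.
The map `U ↦ v⁻¹(U)` is an inclusion-preserving bijection from saturated additive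
submonoids of `Γ_max` onto saturated `R`-submodules of `K`, with inverse `M ↦ v(M)`. -/
theorem statement4 {K : Type*} [CommSemiring K]
    (hidem : ∀ x : K, x + x = x)
    (hug : ∀ x : K, ∃ (n : ℕ) (u : Fin n → Kˣ), x = ∑ i, (u i : K))
    {Γ : Type*} [CommGroup Γ] [LinearOrder Γ] [IsOrderedMonoid Γ]
    (v : K → WithZero Γ) (hsurj : Function.Surjective v)
    (hv0 : v 0 = 0) (hv1 : v 1 = 1)
    (hvmul : ∀ x y, v (x * y) = v x * v y)
    (hvadd : ∀ x y, v (x + y) = max (v x) (v y)) :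
    (∀ U : Set (WithZero Γ), IsSatSubmonoidMax U → IsSatRSubmodule v (v ⁻¹' U)) ∧
    (∀ U₁ U₂ : Set (WithZero Γ), IsSatSubmonoidMax U₁ → IsSatSubmonoidMax U₂ →
      U₁ ⊆ U₂ → v ⁻¹' U₁ ⊆ v ⁻¹' U₂) ∧
    (∀ U : Set (WithZero Γ), IsSatSubmonoidMax U → v '' (v ⁻¹' U) = U) ∧
    (∀ M : Set K, IsSatRSubmodule v M →
      IsSatSubmonoidMax (v '' M) ∧ v ⁻¹' (v '' M) = M) := by
  have hvmono : ∀ a b : K, a + b = b → v a ≤ v b := by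
    intro a b hab
    calc v a ≤ max (v a) (v b) := le_max_left _ _
      _ = v (a + b) := (hvadd a b).symm
      _ = v b := by rw [hab]
  refine ⟨?_, ?_, ?_, ?_⟩
  · intro U hU
    refine ⟨?_, ?_, ?_, ?_⟩
    · show v 0 ∈ U; rw [hv0]; exact hU.1
    · intro a b ha hb
      show v (a + b) ∈ U
      rw [hvadd]; exact hU.2.1 _ _ ha hb
    · intro r m hr hm
      show v (r * m) ∈ U
      rw [hvmul]
      refine hU.2.2 _ (v m) ?_ hm
      calc v r * v m ≤ 1 * v m := mul_le_mul_left hr _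
        _ = v m := one_mul _
    · intro a b hab hb
      exact hU.2.2 _ _ (hvmono a b hab) hb
  · intro U₁ U₂ _ _ hsub x hx
    exact hsub hx
  · intro U _
    exact Set.image_preimage_eq _ hsurj
  · intro M hM
    refine ⟨⟨⟨0, hM.1, hv0⟩, ?_, ?_⟩, ?_⟩
    · rintro a b ⟨x, hx, rfl⟩ ⟨y, hy, rfl⟩
      exact ⟨x + y, hM.2.1 x y hx hy, hvadd x y⟩
    · rintro a b hab ⟨y, hy, rfl⟩
      obtain ⟨x, rfl⟩ := hsurj a
      exact ⟨x, aux_key hidem hug hv0 hv1 hvmul hvadd hM hy hab, rfl⟩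
    · apply Set.Subset.antisymm
      · rintro x ⟨y, hy, hxy⟩
        exact aux_key hidem hug hv0 hv1 hvmul hvadd hM hy (le_of_eq hxy.symm)
      · exact Set.subset_preimage_image v M
end

section
/- Let R be a valuation subsemiring of a unitgenerated idempotent semiring K. Then the saturated ideals of R are totally ordered by inclusion: for any two saturated ideals I, J of R, either I ⊆ J or J ⊆ I. -/
/-- Let `R` be a valuation subsemiring of a unitgenerated idempotent
semiring `K`.  Then the saturated ideals of `R` are totally ordered by inclusion. -/
theorem statement5 {K : Type*} [CommSemiring K]
    (hidem : ∀ x : K, x + x = x)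
    (hug : ∀ x : K, ∃ (n : ℕ) (u : Fin n → Kˣ), x = ∑ i, (u i : K))
    (R : Set K)
    (h0 : (0 : K) ∈ R) (h1 : (1 : K) ∈ R)
    (hadd : ∀ a b : K, a ∈ R → b ∈ R → a + b ∈ R)
    (hmul : ∀ a b : K, a ∈ R → b ∈ R → a * b ∈ R)
    (hsat : ∀ a b : K, a + b = b → b ∈ R → a ∈ R)
    (hval : ∀ x : Kˣ, (x : K) ∈ R ∨ ((x⁻¹ : Kˣ) : K) ∈ R)
    (I J : Set K)
    (hIR : I ⊆ R) (hI0 : (0 : K) ∈ I)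
    (hIadd : ∀ a b : K, a ∈ I → b ∈ I → a + b ∈ I)
    (hImul : ∀ r a : K, r ∈ R → a ∈ I → r * a ∈ I)
    (hIsat : ∀ a b : K, a ∈ R → a + b = b → b ∈ I → a ∈ I)
    (hJR : J ⊆ R) (hJ0 : (0 : K) ∈ J)
    (hJadd : ∀ a b : K, a ∈ J → b ∈ J → a + b ∈ J)
    (hJmul : ∀ r a : K, r ∈ R → a ∈ J → r * a ∈ J)
    (hJsat : ∀ a b : K, a ∈ R → a + b = b → b ∈ J → a ∈ J) :
    I ⊆ J ∨ J ⊆ I := by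
  by_cases hIJ : I ⊆ J
  · exact Or.inl hIJ
  · right
    obtain ⟨a, haI, haJ⟩ := Set.not_subset.mp hIJ
    intro b hbJ
    obtain ⟨n, u, hua⟩ := hug a
    obtain ⟨m, v, hvb⟩ := hug b
    have hle_a : ∀ i, (u i : K) + a = a := by
      intro i
      have h := Fintype.sum_eq_add_sum_compl i (fun k => (u k : K))
      rw [hua, h, ← add_assoc, hidem]
    have hle_b : ∀ j, (v j : K) + b = b := by
      intro j
      have h := Fintype.sum_eq_add_sum_compl j (fun k => (v k : K))
      rw [hvb, h, ← add_assoc, hidem]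
    have huR : ∀ i, (u i : K) ∈ R := fun i => hsat _ a (hle_a i) (hIR haI)
    have huI : ∀ i, (u i : K) ∈ I := fun i => hIsat _ a (huR i) (hle_a i) haI
    have hvR : ∀ j, (v j : K) ∈ R := fun j => hsat _ b (hle_b j) (hJR hbJ)
    have hvJ : ∀ j, (v j : K) ∈ J := fun j => hJsat _ b (hvR j) (hle_b j) hbJ
    have key : ∀ j, ∃ i, ((v j * (u i)⁻¹ : Kˣ) : K) ∈ R := by
      intro j
      by_contra hcon
      push_neg at hcon
      have huJ : ∀ i, (u i : K) ∈ J := by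
        intro i
        have hR : (((v j * (u i)⁻¹)⁻¹ : Kˣ) : K) ∈ R :=
          (hval (v j * (u i)⁻¹)).resolve_left (hcon i)
        have heq : (((v j * (u i)⁻¹)⁻¹ : Kˣ) : K) * (v j : K) = (u i : K) := by
          rw [← Units.val_mul]
          congr 1
          group
        have hm := hJmul _ _ hR (hvJ j)
        rwa [heq] at hm
      have haJ' : a ∈ J := by
        rw [hua]
        exact Finset.sum_induction _ (· ∈ J) hJadd hJ0 (fun i _ => huJ i)
      exact haJ haJ'
    have hvI : ∀ j, (v j : K) ∈ I := by
      intro j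
      obtain ⟨i, hiR⟩ := key j
      have heq : ((v j * (u i)⁻¹ : Kˣ) : K) * (u i : K) = (v j : K) := by
        rw [← Units.val_mul]
        congr 1
        group
      have hm := hImul _ _ hiR (huI i)
      rwa [heq] at hm
    rw [hvb]
    exact Finset.sum_induction _ (· ∈ I) hIadd hI0 (fun j _ => hvI j)
end

section
/- Let R be a simple idempotent semiring. Then every radical congruence on R is QC, i.e. its quotient is multiplicatively cancellative. -/
/-- A congruence on a semiring, as a relation: an equivalence relation compatible with
addition and multiplication. -/
def IsCong {R : Type*} [Add R] [Mul R] (r : R → R → Prop) : Prop :=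
  Equivalence r ∧ (∀ a b c d, r a b → r c d → r (a + c) (b + d)) ∧
    ∀ a b c d, r a b → r c d → r (a * c) (b * d)

/-- A prime congruence: `0` is not congruent to `1`, and whenever
`x*y + z*w ∼ x*w + z*y`, either `x ∼ z` or `y ∼ w`. -/
def IsPrimeCong {R : Type*} [Add R] [Mul R] [Zero R] [One R] (r : R → R → Prop) : Prop :=
  ¬ r 0 1 ∧ ∀ x y z w, r (x * y + z * w) (x * w + z * y) → r x z ∨ r y w

/-- Let `R` be a simple idempotent semiring.  Then every radical
congruence on `R` (an intersection of prime congruences) is QC: its quotient is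
multiplicatively cancellative, i.e. `s*x ∼ s*y` with `s` not congruent to `0` implies
`x ∼ y`. -/
theorem statement6 {R : Type*} [CommSemiring R]
    (hidem : ∀ x : R, x + x = x)
    (hsimple : ∀ I : Set R,
      0 ∈ I →
      (∀ a b, a ∈ I → b ∈ I → a + b ∈ I) →
      (∀ r a, a ∈ I → r * a ∈ I) →
      (∀ a b, a + b = b → b ∈ I → a ∈ I) →
      I = {0} ∨ I = Set.univ)
    (c : R → R → Prop)
    (hradical : ∃ S : Set (R → R → Prop),
      (∀ p ∈ S, IsCong p ∧ IsPrimeCong p) ∧ ∀ x y, c x y ↔ ∀ p ∈ S, p x y) :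
    ∀ s x y : R, ¬ c s 0 → c (s * x) (s * y) → c x y := by
  obtain ⟨S, hS, hc⟩ := hradical
  intro s x y hns hsxy
  -- s ≠ 0
  have hs0 : s ≠ 0 := by
    rintro rfl
    exact hns ((hc 0 0).mpr fun p hp => (hS p hp).1.1.refl 0)
  rw [hc]
  intro p hp
  obtain ⟨⟨heq, hadd, hmul⟩, hprime⟩ := hS p hp
  -- the set of elements congruent to 0 is a saturated ideal
  have key : {a : R | p a 0} = {0} := by
    rcases hsimple {a : R | p a 0} (heq.refl 0)
        (fun a b ha hb => by
          have := hadd a 0 b 0 ha hb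
          simpa using this)
        (fun r a ha => by
          have := hmul r r a 0 (heq.refl r) ha
          simpa using this)
        (fun a b hab hb => by
          have h1 : p (a + b) (a + 0) := hadd a a b 0 (heq.refl a) hb
          rw [hab, add_zero] at h1
          exact heq.trans (heq.symm h1) hb) with h | h
    · exact h
    · exfalso
      have h1 : p 1 0 := by have : (1:R) ∈ {a : R | p a 0} := h ▸ Set.mem_univ 1; exact this
      exact hprime.1 (heq.symm h1)
  have hps0 : ¬ p s 0 := fun h => hs0 (by
    have : s ∈ ({0} : Set R) := key ▸ h
    simpa using this)
  have hpsxy : p (s * x) (s * y) := (hc _ _).mp hsxy p hp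
  have := hprime.2 s x 0 y (by simpa using hpsxy)
  tauto
end

section
/- Let R be an idempotent semiring, A an R-algebra which is an idempotent semiring, and x ∈ A. Then x is integral over R if and only if there exist an integer n ≥ 2 and elements c_0, …, c_{n-1} ∈ R such that x^n ≤ c_0•1 + c_1•x + … + c_{n-1}•x^{n-1} in the canonical order of A. -/
/-- A saturated subsemiring of an idempotent semiring `A`: a subsemiring (as a set)
that is saturated for the canonical order `a ≤ b ↔ a + b = b`. -/
def IsSatSubsemiring {A : Type*} [CommSemiring A] (S : Set A) : Prop :=
  0 ∈ S ∧ 1 ∈ S ∧ (∀ a b, a ∈ S → b ∈ S → a + b ∈ S) ∧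
    (∀ a b, a ∈ S → b ∈ S → a * b ∈ S) ∧ ∀ a b, a + b = b → b ∈ S → a ∈ S

/-- `R⟨x⟩`: the smallest saturated subsemiring of `A` containing `x` and the image
of `R`. -/
def satGen (R : Type*) {A : Type*} [CommSemiring R] [CommSemiring A] [Algebra R A]
    (x : A) : Set A :=
  ⋂₀ {S : Set A | IsSatSubsemiring S ∧ x ∈ S ∧ Set.range (algebraMap R A) ⊆ S}

section Aux
variable {R A : Type*} [CommSemiring R] [CommSemiring A] [Algebra R A]

lemma satGen_min {S : Set A} (x : A) (hS : IsSatSubsemiring S) (hx : x ∈ S)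
    (hr : Set.range (algebraMap R A) ⊆ S) : satGen R x ⊆ S :=
  Set.sInter_subset_of_mem ⟨hS, hx, hr⟩

lemma pow_mem_satGen (x : A) (k : ℕ) : x ^ k ∈ satGen R x := by
  intro S hS
  obtain ⟨⟨h0, h1, hadd, hmul, hsat⟩, hx, hr⟩ := hS
  induction k with
  | zero => simpa using h1
  | succ k ih => rw [pow_succ]; exact hmul _ _ ih hx

end Aux


section Aux
variable {A : Type*} [CommSemiring A]

lemma leTrans {a b c : A} (h1 : a + b = b) (h2 : b + c = c) : a + c = c := by
  rw [← h2, ← add_assoc, h1]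

lemma addMono {a b c d : A} (h1 : a + b = b) (h2 : c + d = d) :
    (a + c) + (b + d) = b + d := by
  rw [add_add_add_comm, h1, h2]

lemma mulMono (hA : ∀ a : A, a + a = a) {a b c d : A} (h1 : a + b = b) (h2 : c + d = d) :
    a * c + b * d = b * d := by
  have key : b * d = a * c + (a * d + (b * c + b * d)) := by
    calc b * d = (a + b) * (c + d) := by rw [h1, h2]
      _ = a * c + (a * d + (b * c + b * d)) := by ring
  calc a * c + b * d = a * c + (a * c + (a * d + (b * c + b * d))) := by rw [← key]
    _ = (a * c + a * c) + (a * d + (b * c + b * d)) := by rw [← add_assoc]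
    _ = a * c + (a * d + (b * c + b * d)) := by rw [hA]
    _ = b * d := key.symm

lemma sumLe {ι : Type*} (s : Finset ι) (f g : ι → A) (h : ∀ i ∈ s, f i + g i = g i) :
    s.sum f + s.sum g = s.sum g := by
  rw [← Finset.sum_add_distrib]; exact Finset.sum_congr rfl h

lemma memSumLe (hA : ∀ a : A, a + a = a) {ι : Type*} (s : Finset ι) (f : ι → A)
    {i : ι} (hi : i ∈ s) : f i + s.sum f = s.sum f := by
  classical
  rw [← Finset.add_sum_erase _ f hi, ← add_assoc, hA]

end Aux

section Fwd
variable {R A : Type*} [CommSemiring R] [CommSemiring A] [Algebra R A]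

lemma fwd (hA : ∀ a : A, a + a = a) (x : A)
    (h : ∃ m ∈ satGen R x, ∀ y ∈ satGen R x, ∃ r : R, y + r • m = r • m) :
    ∃ n : ℕ, 2 ≤ n ∧ ∃ c : Fin n → R,
      x ^ n + ∑ i : Fin n, c i • x ^ (i : ℕ) = ∑ i : Fin n, c i • x ^ (i : ℕ) := by
  obtain ⟨m, hm, hb⟩ := h
  set T : Set A := {a : A | ∃ p : Polynomial R, a + Polynomial.aeval x p = Polynomial.aeval x p}
    with hT
  have hTsub : satGen R x ⊆ T := by
    apply satGen_min
    · refine ⟨⟨0, by simp⟩, ⟨1, by simpa using hA 1⟩, ?_, ?_, ?_⟩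
      · rintro a b ⟨p, hp⟩ ⟨q, hq⟩
        exact ⟨p + q, by rw [map_add]; exact addMono hp hq⟩
      · rintro a b ⟨p, hp⟩ ⟨q, hq⟩
        exact ⟨p * q, by rw [map_mul]; exact mulMono hA hp hq⟩
      · rintro a b hab ⟨p, hp⟩
        exact ⟨p, leTrans hab hp⟩
    · exact ⟨Polynomial.X, by simpa using hA x⟩
    · rintro _ ⟨r, rfl⟩
      exact ⟨Polynomial.C r, by simpa using hA (algebraMap R A r)⟩
  obtain ⟨p, hp⟩ := hTsub hm
  set n : ℕ := max (p.natDegree + 1) 2 with hn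
  obtain ⟨r, hr⟩ := hb (x ^ n) (pow_mem_satGen x n)
  have hdeg : p.natDegree < n := lt_of_lt_of_le (Nat.lt_succ_self _) (le_max_left _ _)
  have haev : Polynomial.aeval x p = ∑ i ∈ Finset.range n, p.coeff i • x ^ i :=
    Polynomial.aeval_eq_sum_range' hdeg x
  refine ⟨n, le_max_right _ _, fun i => r * p.coeff i, ?_⟩
  have hsum : r • Polynomial.aeval x p = ∑ i : Fin n, (r * p.coeff i) • x ^ (i : ℕ) := by
    rw [haev, Finset.smul_sum, ← Fin.sum_univ_eq_sum_range (fun i => r • (p.coeff i • x ^ i))]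
    exact Finset.sum_congr rfl fun i _ => (smul_smul r (p.coeff i) (x ^ (i : ℕ)))
  rw [← hsum]
  -- x^n ≤ r • m ≤ r • aeval x p
  have h2 : r • m + r • Polynomial.aeval x p = r • Polynomial.aeval x p := by
    rw [← smul_add, hp]
  exact leTrans hr h2
end Fwd

section Bwd
variable {R A : Type*} [CommSemiring R] [CommSemiring A] [Algebra R A]

lemma bwd (hA : ∀ a : A, a + a = a) (x : A)
    (h : ∃ n : ℕ, 2 ≤ n ∧ ∃ c : Fin n → R,
      x ^ n + ∑ i : Fin n, c i • x ^ (i : ℕ) = ∑ i : Fin n, c i • x ^ (i : ℕ)) :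
    ∃ m ∈ satGen R x, ∀ y ∈ satGen R x, ∃ r : R, y + r • m = r • m := by
  obtain ⟨n, hn2, c, hc⟩ := h
  set P : A := ∑ i : Fin n, c i • x ^ (i : ℕ) with hP
  set m : A := ∑ i : Fin n, x ^ (i : ℕ) with hm
  -- every power of x is bounded by some r • m
  have key : ∀ k : ℕ, ∃ r : R, x ^ k + r • m = r • m := by
    intro k
    induction k using Nat.strong_induction_on with
    | _ k IH =>
      by_cases hk : k < n
      · refine ⟨1, ?_⟩
        rw [one_smul]
        exact memSumLe hA Finset.univ (fun i : Fin n => x ^ (i : ℕ))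
          (Finset.mem_univ (⟨k, hk⟩ : Fin n))
      · push_neg at hk
        have h1 : x ^ k + x ^ (k - n) * P = x ^ (k - n) * P := by
          have := congrArg (fun z => x ^ (k - n) * z) hc
          simp only [mul_add] at this
          rwa [← pow_add, Nat.sub_add_cancel hk] at this
        have h2 : ∀ i : Fin n, ∃ r : R, x ^ ((i : ℕ) + (k - n)) + r • m = r • m := by
          intro i
          exact IH _ (by omega)
        choose r hr using h2
        have hPe : x ^ (k - n) * P = ∑ i : Fin n, c i • x ^ ((i : ℕ) + (k - n)) := by
          rw [hP, Finset.mul_sum]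
          refine Finset.sum_congr rfl fun i _ => ?_
          rw [mul_smul_comm, ← pow_add, add_comm (k - n) (i : ℕ)]
        refine ⟨∑ i, c i * r i, leTrans h1 ?_⟩
        rw [hPe, Finset.sum_smul]
        refine sumLe _ _ _ fun i _ => ?_
        rw [mul_smul, ← smul_add, hr i]
  -- m ∈ satGen
  have hmSat : m ∈ satGen R x := by
    intro S hS
    obtain ⟨⟨h0, h1, hadd, hmul, hsat⟩, hx, hr⟩ := hS
    refine Finset.sum_induction _ (· ∈ S) (fun a b ha hb => hadd a b ha hb) h0 fun i _ => ?_
    have : x ^ (i : ℕ) ∈ satGen R x := pow_mem_satGen x (i : ℕ)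
    exact this S ⟨⟨h0, h1, hadd, hmul, hsat⟩, hx, hr⟩
  -- m * m bounded
  have hmm : ∃ t : R, m * m + t • m = t • m := by
    have hexp : m * m = ∑ i : Fin n, ∑ j : Fin n, x ^ ((i : ℕ) + (j : ℕ)) := by
      rw [hm, Finset.sum_mul_sum]
      exact Finset.sum_congr rfl fun i _ => Finset.sum_congr rfl fun j _ => (pow_add x _ _).symm
    choose r hr using fun i j : Fin n => key ((i : ℕ) + (j : ℕ))
    refine ⟨∑ i, ∑ j, r i j, ?_⟩
    rw [hexp, Finset.sum_smul]
    refine sumLe _ _ _ fun i _ => ?_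
    rw [Finset.sum_smul]
    exact sumLe _ _ _ fun j _ => hr i j
  obtain ⟨t, ht⟩ := hmm
  -- the bounding set M
  set M : Set A := {a : A | ∃ r : R, a + r • m = r • m} with hM
  have hsub : satGen R x ⊆ M := by
    apply satGen_min
    · refine ⟨⟨0, by simp⟩, ?_, ?_, ?_, ?_⟩
      · obtain ⟨r, hr⟩ := key 0
        exact ⟨r, by rw [← pow_zero x]; exact hr⟩
      · rintro a b ⟨r, hra⟩ ⟨s, hsb⟩
        exact ⟨r + s, by rw [add_smul]; exact addMono hra hsb⟩
      · rintro a b ⟨r, hra⟩ ⟨s, hsb⟩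
        refine ⟨r * s * t, ?_⟩
        have step1 : a * b + (r • m) * (s • m) = (r • m) * (s • m) := mulMono hA hra hsb
        have e1 : (r • m) * (s • m) = (r * s) • (m * m) := by
          rw [smul_mul_assoc, mul_smul_comm, smul_smul]
        have step2 : (r * s) • (m * m) + (r * s * t) • m = (r * s * t) • m := by
          rw [mul_assoc, mul_smul, mul_smul, mul_smul, ← smul_add, ← smul_add, ht]
        rw [e1] at step1
        exact leTrans step1 step2
      · rintro a b hab ⟨r, hrb⟩
        exact ⟨r, leTrans hab hrb⟩
    · obtain ⟨r, hr⟩ := key 1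
      exact ⟨r, by rw [← pow_one x]; exact hr⟩
    · rintro _ ⟨s, rfl⟩
      obtain ⟨r, hr⟩ := key 0
      rw [pow_zero] at hr
      refine ⟨s * r, ?_⟩
      rw [Algebra.algebraMap_eq_smul_one, mul_smul, ← smul_add, hr]
  exact ⟨m, hmSat, fun y hy => hsub hy⟩

end Bwd

/-- `x ∈ A` is integral over `R` if `R⟨x⟩` is a finite `R`-module: there is some
`m ∈ R⟨x⟩` such that every `y ∈ R⟨x⟩` satisfies `y ≤ r • m` for some `r ∈ R`. -/
def IsIntegralOne (R : Type*) {A : Type*} [CommSemiring R] [CommSemiring A] [Algebra R A]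
    (x : A) : Prop :=
  ∃ m ∈ satGen R x, ∀ y ∈ satGen R x, ∃ r : R, y + r • m = r • m

/-- `x ∈ A` is quasiintegral over `R` if there exists an `R⟨x⟩`-submodule `M ⊆ A` which
is finite as an `R`-module and faithful as an `R⟨x⟩`-module. -/
def IsQuasiIntegralOne (R : Type*) {A : Type*} [CommSemiring R] [CommSemiring A]
    [Algebra R A] (x : A) : Prop :=
  ∃ M : Set A,
    0 ∈ M ∧ (∀ a b, a ∈ M → b ∈ M → a + b ∈ M) ∧
    (∀ t ∈ satGen R x, ∀ m ∈ M, t * m ∈ M) ∧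
    (∃ m₀ ∈ M, ∀ y ∈ M, ∃ r : R, y + r • m₀ = r • m₀) ∧
    ∀ t ∈ satGen R x, t ≠ 0 → ∃ m ∈ M, t * m ≠ 0

/-- Let `R` be an idempotent semiring, `A` an `R`-algebra which is an
idempotent semiring, `x ∈ A`.  Then `x` is integral over `R` iff there are `n ≥ 2` and
`c_0, …, c_{n-1} ∈ R` with `x^n ≤ c_0•1 + c_1•x + … + c_{n-1}•x^{n-1}` in the canonical
order of `A`. -/
theorem statement10 {R A : Type*} [CommSemiring R] [CommSemiring A] [Algebra R A]
    (hR : ∀ r : R, r + r = r) (hA : ∀ a : A, a + a = a) (x : A) :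
    IsIntegralOne R x ↔
      ∃ n : ℕ, 2 ≤ n ∧ ∃ c : Fin n → R,
        x ^ n + ∑ i : Fin n, c i • x ^ (i : ℕ) = ∑ i : Fin n, c i • x ^ (i : ℕ) := by
  constructor
  · exact fun h => fwd hA x h
  · exact fun h => bwd hA x h
end

section
/- Let R be an idempotent semiring and A a simple R-algebra (an idempotent semiring) which is seminoetherian as an R-module. Then every element of A that is quasiintegral over R is integral over R. -/
/-- An `R`-submodule of `A` (as a set): contains `0`, closed under addition and under
the scalar action of `R`. -/
def IsRSubmodule (R : Type*) {A : Type*} [CommSemiring R] [CommSemiring A] [Algebra R A]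
    (M : Set A) : Prop :=
  0 ∈ M ∧ (∀ a b, a ∈ M → b ∈ M → a + b ∈ M) ∧ ∀ (r : R), ∀ a ∈ M, r • a ∈ M

/-- A subset `M ⊆ A` is finite as an `R`-module if there is `m ∈ M` with every `y ∈ M`
satisfying `y ≤ r • m` for some `r ∈ R`. -/
def IsFiniteMod (R : Type*) {A : Type*} [CommSemiring R] [CommSemiring A] [Algebra R A]
    (M : Set A) : Prop :=
  ∃ m ∈ M, ∀ y ∈ M, ∃ r : R, y + r • m = r • m

/-- Let `R` be an idempotent semiring and `A` a simple `R`-algebra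
(an idempotent semiring) which is seminoetherian as an `R`-module (every finite
submodule is noetherian, i.e. all of its submodules are finite).  Then every element of
`A` that is quasiintegral over `R` is integral over `R`. -/
theorem statement13 {R A : Type*} [CommSemiring R] [CommSemiring A] [Algebra R A]
    (hR : ∀ r : R, r + r = r) (hA : ∀ a : A, a + a = a)
    (hsimple : ∀ I : Set A,
      0 ∈ I →
      (∀ a b, a ∈ I → b ∈ I → a + b ∈ I) →
      (∀ r a, a ∈ I → r * a ∈ I) →
      (∀ a b, a + b = b → b ∈ I → a ∈ I) →
      I = {0} ∨ I = Set.univ)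
    (hseminoeth : ∀ M : Set A, IsRSubmodule R M → IsFiniteMod R M →
      ∀ N ⊆ M, IsRSubmodule R N → IsFiniteMod R N)
    (x : A) (hx : IsQuasiIntegralOne R x) :
    IsIntegralOne R x := by
  classical
  -- basic order lemmas for the canonical order a ≤ b ↔ a + b = b
  have letrans : ∀ a b c : A, a + b = b → b + c = c → a + c = c := by
    intro a b c h1 h2
    calc a + c = a + (b + c) := by rw [h2]
      _ = (a + b) + c := by ring
      _ = b + c := by rw [h1]
      _ = c := h2
  have mulmono : ∀ (c a b : A), a + b = b → c * a + c * b = c * b := by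
    intro c a b h; rw [← mul_add, h]
  have addle : ∀ a b c d : A, a + b = b → c + d = d → (a + c) + (b + d) = b + d := by
    intro a b c d h1 h2
    calc (a + c) + (b + d) = (a + b) + (c + d) := by ring
      _ = b + d := by rw [h1, h2]
  -- basic membership facts about satGen
  have zero_mem : (0 : A) ∈ satGen R x :=
    Set.mem_sInter.mpr fun S hS => hS.1.1
  have one_mem : (1 : A) ∈ satGen R x :=
    Set.mem_sInter.mpr fun S hS => hS.1.2.1
  have x_mem : x ∈ satGen R x :=
    Set.mem_sInter.mpr fun S hS => hS.2.1
  have add_mem : ∀ a b : A, a ∈ satGen R x → b ∈ satGen R x → a + b ∈ satGen R x := by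
    intro a b ha hb
    exact Set.mem_sInter.mpr fun S hS =>
      hS.1.2.2.1 a b (Set.mem_sInter.mp ha S hS) (Set.mem_sInter.mp hb S hS)
  have mul_mem : ∀ a b : A, a ∈ satGen R x → b ∈ satGen R x → a * b ∈ satGen R x := by
    intro a b ha hb
    exact Set.mem_sInter.mpr fun S hS =>
      hS.1.2.2.2.1 a b (Set.mem_sInter.mp ha S hS) (Set.mem_sInter.mp hb S hS)
  have alg_mem : ∀ r : R, algebraMap R A r ∈ satGen R x := by
    intro r
    exact Set.mem_sInter.mpr fun S hS => hS.2.2 ⟨r, rfl⟩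
  by_cases h10 : (1 : A) = 0
  · -- trivial semiring
    have hall : ∀ a : A, a = 0 := by
      intro a; rw [← mul_one a, h10, mul_zero]
    refine ⟨0, zero_mem, fun y hy => ⟨1, ?_⟩⟩
    rw [hall y, smul_zero, add_zero]
  -- nontrivial case
  obtain ⟨M, hM0, hMadd, hMst, ⟨m₀, hm₀, hgen⟩, hfaith⟩ := hx
  -- m₀ ≠ 0
  have hm₀ne : m₀ ≠ 0 := by
    intro h
    obtain ⟨m, hmM, hmne⟩ := hfaith 1 one_mem h10
    obtain ⟨r, hr⟩ := hgen m hmM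
    rw [h, smul_zero, add_zero] at hr
    exact hmne (by rw [hr, mul_zero])
  -- the saturated ideal generated by m₀ is everything; get c with 1 ≤ c * m₀
  have hc : ∃ c : A, 1 + c * m₀ = c * m₀ := by
    have hI := hsimple {a : A | ∃ c : A, a + c * m₀ = c * m₀}
      ⟨0, by rw [zero_add]⟩
      (by
        rintro a b ⟨c, hc⟩ ⟨d, hd⟩
        exact ⟨c + d, by rw [add_mul]; exact addle _ _ _ _ hc hd⟩)
      (by
        rintro r a ⟨c, hc⟩
        refine ⟨r * c, ?_⟩
        have := mulmono r _ _ hc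
        rwa [← mul_assoc] at this)
      (by
        rintro a b hab ⟨c, hc⟩
        exact ⟨c, letrans _ _ _ hab hc⟩)
    rcases hI with hI | hI
    · exfalso
      have : m₀ ∈ {a : A | ∃ c : A, a + c * m₀ = c * m₀} :=
        ⟨1, by rw [one_mul]; exact hA m₀⟩
      rw [hI] at this
      exact hm₀ne this
    · have : (1 : A) ∈ {a : A | ∃ c : A, a + c * m₀ = c * m₀} := by
        rw [hI]; trivial
      exact this
  obtain ⟨c, hc⟩ := hc
  -- key: every t ∈ satGen R x satisfies t * m₀ ≤ r • m₀ for some r : R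
  have key : ∀ t ∈ satGen R x, ∃ r : R, t * m₀ + r • m₀ = r • m₀ := by
    intro t ht
    have hS'sat : IsSatSubsemiring {a : A | ∃ r : R, a * m₀ + r • m₀ = r • m₀} := by
      refine ⟨⟨1, by rw [zero_mul, zero_add]⟩, ⟨1, by rw [one_mul, one_smul]; exact hA m₀⟩,
        ?_, ?_, ?_⟩
      · rintro a b ⟨r, hr⟩ ⟨s, hs⟩
        exact ⟨r + s, by rw [add_mul, add_smul]; exact addle _ _ _ _ hr hs⟩
      · rintro a b ⟨r, hr⟩ ⟨s, hs⟩
        refine ⟨s * r, ?_⟩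
        have h1 : a * (b * m₀) + s • (a * m₀) = s • (a * m₀) := by
          have := mulmono a _ _ hs
          rwa [mul_smul_comm] at this
        have h2 : s • (a * m₀) + (s * r) • m₀ = (s * r) • m₀ := by
          have : s • (a * m₀ + r • m₀) = s • (r • m₀) := by rw [hr]
          rwa [smul_add, smul_smul] at this
        have := letrans _ _ _ h1 h2
        rwa [← mul_assoc] at this
      · rintro a b hab ⟨r, hr⟩
        refine ⟨r, letrans _ _ _ ?_ hr⟩
        rw [mul_comm a, mul_comm b]
        exact mulmono m₀ a b hab
    have hxS' : x ∈ {a : A | ∃ r : R, a * m₀ + r • m₀ = r • m₀} :=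
      hgen (x * m₀) (hMst x x_mem m₀ hm₀)
    have hrangeS' : Set.range (algebraMap R A) ⊆
        {a : A | ∃ r : R, a * m₀ + r • m₀ = r • m₀} := by
      rintro _ ⟨r, rfl⟩
      exact ⟨r, by rw [← Algebra.smul_def]; exact hA _⟩
    exact Set.mem_sInter.mp ht _ ⟨hS'sat, hxS', hrangeS'⟩
  -- bound: every t ∈ satGen R x satisfies t ≤ r • (c * m₀) for some r : R
  have bound : ∀ t ∈ satGen R x, ∃ r : R, t + r • (c * m₀) = r • (c * m₀) := by
    intro t ht
    obtain ⟨r, hr⟩ := key t ht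
    refine ⟨r, ?_⟩
    have h1 : t + c * (t * m₀) = c * (t * m₀) := by
      have := mulmono t _ _ hc
      rw [mul_one] at this
      rwa [show t * (c * m₀) = c * (t * m₀) by ring] at this
    have h2 : c * (t * m₀) + r • (c * m₀) = r • (c * m₀) := by
      have := mulmono c _ _ hr
      rwa [mul_smul_comm] at this
    exact letrans _ _ _ h1 h2
  -- W : the R-submodule of elements bounded by R-multiples of c * m₀
  set W : Set A := {y : A | ∃ r : R, y + r • (c * m₀) = r • (c * m₀)} with hW
  have hWsub : IsRSubmodule R W := by
    refine ⟨⟨1, by rw [zero_add]⟩, ?_, ?_⟩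
    · rintro a b ⟨r, hr⟩ ⟨s, hs⟩
      exact ⟨r + s, by rw [add_smul]; exact addle _ _ _ _ hr hs⟩
    · rintro s a ⟨r, hr⟩
      refine ⟨s * r, ?_⟩
      have : s • (a + r • (c * m₀)) = s • (r • (c * m₀)) := by rw [hr]
      rwa [smul_add, smul_smul] at this
  have hWfin : IsFiniteMod R W :=
    ⟨c * m₀, ⟨1, by rw [one_smul]; exact hA _⟩, fun y hy => hy⟩
  -- Q : the down-closure of satGen R x
  set Q : Set A := {y : A | ∃ t ∈ satGen R x, y + t = t} with hQ
  have hQsubW : Q ⊆ W := by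
    rintro y ⟨t, ht, hyt⟩
    obtain ⟨r, hr⟩ := bound t ht
    exact ⟨r, letrans _ _ _ hyt hr⟩
  have hQsub : IsRSubmodule R Q := by
    refine ⟨⟨0, zero_mem, by rw [add_zero]⟩, ?_, ?_⟩
    · rintro a b ⟨t₁, ht₁, ha⟩ ⟨t₂, ht₂, hb⟩
      exact ⟨t₁ + t₂, add_mem _ _ ht₁ ht₂, addle _ _ _ _ ha hb⟩
    · rintro r a ⟨t, ht, ha⟩
      refine ⟨algebraMap R A r * t, mul_mem _ _ (alg_mem r) ht, ?_⟩
      have : r • (a + t) = r • t := by rw [ha]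
      rw [smul_add] at this
      rwa [Algebra.smul_def r t] at this
  obtain ⟨q, ⟨tq, htq, hqtq⟩, hbnd⟩ := hseminoeth W hWsub hWfin Q hQsubW hQsub
  -- conclude: tq ∈ satGen R x bounds everything
  refine ⟨tq, htq, ?_⟩
  intro y hy
  obtain ⟨r, hr⟩ := hbnd y ⟨y, hy, hA y⟩
  refine ⟨r, ?_⟩
  have h2 : r • q + r • tq = r • tq := by
    have : r • (q + tq) = r • tq := by rw [hqtq]
    rwa [smul_add] at this
  exact letrans _ _ _ hr h2
end

section
/- Let R be an idempotent semiring and A an R-algebra which is an idempotent semifield. Then every element of A that is quasiintegral over R is integral over R. -/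
/-- Let `R` be an idempotent semiring and `A` an `R`-algebra which is an
idempotent semifield (nontrivial, with every nonzero element a unit).  Then every
element of `A` that is quasiintegral over `R` is integral over `R`. -/
theorem statement14 {R A : Type*} [CommSemiring R] [CommSemiring A] [Algebra R A]
    [Nontrivial A]
    (hR : ∀ r : R, r + r = r) (hA : ∀ a : A, a + a = a)
    (hunits : ∀ a : A, a ≠ 0 → IsUnit a)
    (x : A) (hx : IsQuasiIntegralOne R x) :
    IsIntegralOne R x := by
  obtain ⟨M, h0, hadd, hmul, ⟨m₀, hm₀M, hfin⟩, hfaith⟩ := hx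
  have h1 : (1 : A) ∈ satGen R x := by
    intro S hS
    exact hS.1.2.1
  -- m₀ ≠ 0
  have hm₀ne : m₀ ≠ 0 := by
    intro h
    obtain ⟨m, hmM, hm⟩ := hfaith 1 h1 one_ne_zero
    obtain ⟨r, hr⟩ := hfin m hmM
    rw [h, smul_zero, add_zero] at hr
    exact hm (by rw [hr, mul_zero])
  obtain ⟨b, hb⟩ := (hunits m₀ hm₀ne).exists_right_inv
  refine ⟨1, h1, fun y hy => ?_⟩
  obtain ⟨r, hr⟩ := hfin (y * m₀) (hmul y hy m₀ hm₀M)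
  refine ⟨r, ?_⟩
  have := congrArg (· * b) hr
  simpa [add_mul, mul_assoc, hb, smul_mul_assoc] using this
end

section
/- Let R be an idempotent semiring, K a simple R-algebra (an idempotent semiring), and x ∈ K. Then x is quasiintegral over R if and only if every homomorphism v : K → Γ_max into Γ_max for a linearly ordered abelian group Γ which satisfies v(r•1) ≤ 1 for all r ∈ R also satisfies v(x) ≤ 1. -/
universe u

namespace S15

/-- Data of a total, cancellative, compatible preorder on an idempotent semiring. -/
structure GoodData (K : Type u) [CommSemiring K] : Type u where
  Q : K → K → Prop
  refl : ∀ a, Q a a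
  trans : ∀ {a b c}, Q a b → Q b c → Q a c
  addc : ∀ {a b c}, Q a c → Q b c → Q (a + b) c
  mulc : ∀ {a b} (c), Q a b → Q (a * c) (b * c)
  base : ∀ {a b : K}, a + b = b → Q a b
  tot : ∀ a b, Q a b ∨ Q b a
  canc : ∀ {a b c}, Q (a * c) (b * c) → c ≠ 0 → Q a b
  ker : ∀ {a}, Q a 0 → a = 0
  nzd : ∀ {a b : K}, a * b = 0 → a = 0 ∨ b = 0
  one_ne : (1 : K) ≠ 0

namespace GoodData

variable {K : Type u} [CommSemiring K] (d : GoodData K)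

theorem qcongr {a b a' b' : K} (h : d.Q a b) (ha : a = a') (hb : b = b') : d.Q a' b' :=
  ha ▸ hb ▸ h

include d in
theorem mul_ne {a b : K} (ha : a ≠ 0) (hb : b ≠ 0) : a * b ≠ 0 :=
  fun h => Or.elim (GoodData.nzd d h) ha hb

/-- positive pairs -/
def Pos (_d : GoodData K) : Type u := {p : K × K // p.1 ≠ 0 ∧ p.2 ≠ 0}

def sett : Setoid d.Pos where
  r p q := d.Q (p.1.1 * q.1.2) (q.1.1 * p.1.2) ∧ d.Q (q.1.1 * p.1.2) (p.1.1 * q.1.2)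
  iseqv := by
    constructor
    · exact fun p => ⟨d.refl _, d.refl _⟩
    · exact fun h => ⟨h.2, h.1⟩
    · rintro ⟨⟨a, b⟩, hb⟩ ⟨⟨c, e⟩, he⟩ ⟨⟨f, g⟩, hg⟩ ⟨h1, h1'⟩ ⟨h2, h2'⟩
      dsimp only at *
      constructor
      · have s1 : d.Q (a * g * e) (c * b * g) := d.qcongr (d.mulc g h1) (by ring) rfl
        have s2 : d.Q (c * b * g) (f * b * e) := d.qcongr (d.mulc b h2) (by ring) (by ring)
        exact d.canc (d.qcongr (d.trans s1 s2) (by ring) (by ring)) he.2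
      · have s1 : d.Q (f * b * e) (c * g * b) := d.qcongr (d.mulc b h2') (by ring) (by ring)
        have s2 : d.Q (c * g * b) (a * g * e) := d.qcongr (d.mulc g h1') (by ring) (by ring)
        exact d.canc (d.qcongr (d.trans s1 s2) (by ring) (by ring)) he.2

def Gamma : Type u := Quotient d.sett

def pmul (p q : d.Pos) : d.Pos :=
  ⟨(p.1.1 * q.1.1, p.1.2 * q.1.2), d.mul_ne p.2.1 q.2.1, d.mul_ne p.2.2 q.2.2⟩

def pone : d.Pos := ⟨(1, 1), d.one_ne, d.one_ne⟩

def pinv (p : d.Pos) : d.Pos := ⟨(p.1.2, p.1.1), p.2.2, p.2.1⟩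

instance : CommGroup d.Gamma where
  mul := Quotient.map₂ d.pmul (by
    rintro ⟨⟨a, b⟩, h1⟩ ⟨⟨a', b'⟩, h1'⟩ ⟨ha, ha'⟩ ⟨⟨c, e⟩, h2⟩ ⟨⟨c', e'⟩, h2'⟩ ⟨hc, hc'⟩
    dsimp only [pmul] at *
    constructor
    · have s1 : d.Q (a * c * (b' * e')) (a' * b * (c * e')) :=
        d.qcongr (d.mulc (c * e') ha) (by ring) (by ring)
      have s2 : d.Q (a' * b * (c * e')) (a' * c' * (b * e)) :=
        d.qcongr (d.mulc (a' * b) hc) (by ring) (by ring)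
      exact d.trans s1 s2
    · have s1 : d.Q (a' * c' * (b * e)) (a * b' * (c' * e)) :=
        d.qcongr (d.mulc (c' * e) ha') (by ring) (by ring)
      have s2 : d.Q (a * b' * (c' * e)) (a * c * (b' * e')) :=
        d.qcongr (d.mulc (a * b') hc') (by ring) (by ring)
      exact d.trans s1 s2)
  one := Quotient.mk _ d.pone
  inv := Quotient.map d.pinv (by
    rintro ⟨⟨a, b⟩, h1⟩ ⟨⟨c, e⟩, h2⟩ ⟨h, h'⟩
    dsimp only [pinv] at *
    exact ⟨d.qcongr h' (by ring) (by ring), d.qcongr h (by ring) (by ring)⟩)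
  mul_assoc := by
    rintro ⟨⟨⟨a, b⟩, h1⟩⟩ ⟨⟨⟨c, e⟩, h2⟩⟩ ⟨⟨⟨f, g⟩, h3⟩⟩
    refine Quotient.sound ⟨?_, ?_⟩ <;>
      (show d.Q _ _; dsimp only [pmul, pone, pinv]; exact d.qcongr (d.refl _) rfl (by ring))
  one_mul := by
    rintro ⟨⟨⟨a, b⟩, h1⟩⟩
    refine Quotient.sound ⟨?_, ?_⟩ <;>
      (show d.Q _ _; dsimp only [pmul, pone, pinv]; exact d.qcongr (d.refl _) rfl (by ring))
  mul_one := by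
    rintro ⟨⟨⟨a, b⟩, h1⟩⟩
    refine Quotient.sound ⟨?_, ?_⟩ <;>
      (show d.Q _ _; dsimp only [pmul, pone, pinv]; exact d.qcongr (d.refl _) rfl (by ring))
  inv_mul_cancel := by
    rintro ⟨⟨⟨a, b⟩, h1⟩⟩
    refine Quotient.sound ⟨?_, ?_⟩ <;>
      (show d.Q _ _; dsimp only [pmul, pone, pinv]; exact d.qcongr (d.refl _) rfl (by ring))
  mul_comm := by
    rintro ⟨⟨⟨a, b⟩, h1⟩⟩ ⟨⟨⟨c, e⟩, h2⟩⟩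
    refine Quotient.sound ⟨?_, ?_⟩ <;>
      (show d.Q _ _; dsimp only [pmul, pone, pinv]; exact d.qcongr (d.refl _) rfl (by ring))

theorem le_aux {a b c e a' b' c' e' : K} (hb : b ≠ 0) (he : e ≠ 0)
    (ha : d.Q (a' * b) (a * b')) (hc : d.Q (c * e') (c' * e))
    (h : d.Q (a * e) (c * b)) : d.Q (a' * e') (c' * b') := by
  have s1 : d.Q (a' * e' * (b * e)) (a * e * (b' * e')) :=
    d.qcongr (d.mulc (e * e') ha) (by ring) (by ring)
  have s2 : d.Q (a * e * (b' * e')) (c * e' * (b * b')) :=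
    d.qcongr (d.mulc (b' * e') h) (by ring) (by ring)
  have s3 : d.Q (c * e' * (b * b')) (c' * b' * (b * e)) :=
    d.qcongr (d.mulc (b * b') hc) (by ring) (by ring)
  exact d.canc (d.trans s1 (d.trans s2 s3)) (d.mul_ne hb he)

noncomputable instance : LinearOrder d.Gamma where
  le := Quotient.lift₂ (fun p q => d.Q (p.1.1 * q.1.2) (q.1.1 * p.1.2)) (by
    rintro ⟨⟨a, b⟩, h1⟩ ⟨⟨c, e⟩, h2⟩ ⟨⟨a', b'⟩, h1'⟩ ⟨⟨c', e'⟩, h2'⟩ ⟨ha, ha'⟩ ⟨hc, hc'⟩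
    dsimp only at *
    exact propext ⟨fun h => d.le_aux h1.2 h2.2 ha' hc h,
      fun h => d.le_aux h1'.2 h2'.2 ha hc' h⟩)
  le_refl := by rintro ⟨⟨⟨a, b⟩, h1⟩⟩; exact d.refl _
  le_trans := by
    rintro ⟨⟨⟨a, b⟩, h1⟩⟩ ⟨⟨⟨c, e⟩, h2⟩⟩ ⟨⟨⟨f, g⟩, h3⟩⟩ hab hbc
    have s1 : d.Q (a * g * e) (c * b * g) := d.qcongr (d.mulc g hab) (by ring) rfl
    have s2 : d.Q (c * b * g) (f * b * e) := d.qcongr (d.mulc b hbc) (by ring) (by ring)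
    exact d.canc (d.qcongr (d.trans s1 s2) (by ring) (by ring)) h2.2
  le_antisymm := by
    rintro ⟨⟨⟨a, b⟩, h1⟩⟩ ⟨⟨⟨c, e⟩, h2⟩⟩ h h'
    exact Quotient.sound ⟨h, h'⟩
  le_total := by
    rintro ⟨⟨⟨a, b⟩, h1⟩⟩ ⟨⟨⟨c, e⟩, h2⟩⟩
    exact d.tot _ _
  toDecidableLE := fun _ _ => Classical.propDecidable _

noncomputable instance : IsOrderedMonoid d.Gamma where
  mul_le_mul_left := by
    rintro ⟨⟨⟨a, b⟩, h1⟩⟩ ⟨⟨⟨c, e⟩, h2⟩⟩ h ⟨⟨⟨f, g⟩, h3⟩⟩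
    show d.Q (a * f * (e * g)) (c * f * (b * g))
    exact d.qcongr (d.mulc (f * g) h) (by ring) (by ring)

def toGamma (p : d.Pos) : d.Gamma := Quotient.mk d.sett p

noncomputable def val (a : K) : WithZero d.Gamma :=
  letI := Classical.propDecidable (a = 0)
  if h : a = 0 then 0 else WithZero.coe (d.toGamma ⟨(a, 1), h, d.one_ne⟩)

theorem val_zero : d.val 0 = 0 := dif_pos rfl

theorem val_one : d.val 1 = 1 := by
  rw [val, dif_neg d.one_ne]
  rfl

theorem val_mul (a b : K) : d.val (a * b) = d.val a * d.val b := by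
  rcases eq_or_ne a 0 with rfl | ha
  · rw [zero_mul, d.val_zero, zero_mul]
  rcases eq_or_ne b 0 with rfl | hb
  · rw [mul_zero, d.val_zero, mul_zero]
  rw [val, val, val, dif_neg ha, dif_neg hb, dif_neg (d.mul_ne ha hb), ← WithZero.coe_mul,
    WithZero.coe_inj]
  refine Quotient.sound ⟨?_, ?_⟩ <;>
    (show d.Q _ _; dsimp only [pmul, pone, pinv]; exact d.qcongr (d.refl _) rfl (by ring))

theorem val_le_iff (a b : K) : d.val a ≤ d.val b ↔ d.Q a b := by
  rcases eq_or_ne a 0 with rfl | ha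
  · rw [d.val_zero]
    exact iff_of_true (WithZero.zero_le _) (d.base (zero_add b))
  rcases eq_or_ne b 0 with rfl | hb
  · rw [val, val, dif_neg ha, dif_pos rfl]
    refine iff_of_false (fun h => WithZero.coe_ne_zero (le_antisymm h (WithZero.zero_le _)))
      (fun h => ha (d.ker h))
  · rw [val, val, dif_neg ha, dif_neg hb, WithZero.coe_le_coe]
    show d.Q (a * 1) (b * 1) ↔ d.Q a b
    rw [mul_one, mul_one]

theorem val_add (a b : K) (hK : ∀ c : K, c + c = c) :
    d.val (a + b) = max (d.val a) (d.val b) := by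
  rcases d.tot a b with h | h
  · have h1 : d.Q (a + b) b := d.addc h (d.refl b)
    have h2 : d.Q b (a + b) := d.base (by rw [add_comm a b, ← add_assoc, hK b])
    have hle : d.val a ≤ d.val b := (d.val_le_iff a b).2 h
    have : d.val (a + b) = d.val b :=
      le_antisymm ((d.val_le_iff _ _).2 h1) ((d.val_le_iff _ _).2 h2)
    rw [this, max_eq_right hle]
  · have h1 : d.Q (a + b) a := d.addc (d.refl a) h
    have h2 : d.Q a (a + b) := d.base (by rw [← add_assoc, hK a])
    have hle : d.val b ≤ d.val a := (d.val_le_iff b a).2 h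
    have : d.val (a + b) = d.val a :=
      le_antisymm ((d.val_le_iff _ _).2 h1) ((d.val_le_iff _ _).2 h2)
    rw [this, max_eq_left hle]

end GoodData

end S15

namespace S15

section Construction

variable {K : Type u} [CommSemiring K]

/-- the canonical idempotent order -/
def lek (a b : K) : Prop := a + b = b

theorem lek_refl (hK : ∀ a : K, a + a = a) (a : K) : lek a a := hK a

theorem lek_trans {a b c : K} (h1 : lek a b) (h2 : lek b c) : lek a c := by
  show a + c = c; rw [← h2, ← add_assoc, h1]

theorem lek_add {a b c : K} (h1 : lek a c) (h2 : lek b c) : lek (a + b) c := by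
  show a + b + c = c; rw [add_assoc, h2, h1]

theorem lek_left (hK : ∀ a : K, a + a = a) (a b : K) : lek a (a + b) := by
  show a + (a + b) = a + b; rw [← add_assoc, hK]

theorem lek_right (hK : ∀ a : K, a + a = a) (a b : K) : lek b (a + b) := by
  show b + (a + b) = a + b; rw [add_comm a b, ← add_assoc, hK]

theorem lek_mul {a b : K} (c : K) (h : lek a b) : lek (a * c) (b * c) := by
  show a * c + b * c = b * c; rw [← add_mul, h]

theorem lek_congr {a b a' b' : K} (h : lek a b) (ha : a = a') (hb : b = b') : lek a' b' :=
  ha ▸ hb ▸ h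

theorem lek_mul2 {a b c e : K} (h1 : lek a b) (h2 : lek c e) : lek (a * c) (b * e) :=
  lek_trans (lek_mul c h1) (lek_congr (lek_mul b h2) (by ring) (by ring))

theorem lek_pow (hK : ∀ a : K, a + a = a) {a b : K} (h : lek a b) :
    ∀ n : ℕ, lek (a ^ n) (b ^ n)
  | 0 => by
      have : lek (1 : K) 1 := hK 1
      exact lek_congr this (by rw [pow_zero]) (by rw [pow_zero])
  | n + 1 => by
      have := lek_mul2 (lek_pow hK h n) h
      exact lek_congr this (by ring) (by ring)

theorem lek_sum (hK : ∀ a : K, a + a = a) {ι : Type*} {s : Finset ι} {f : ι → K} {i : ι}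
    (hi : i ∈ s) : lek (f i) (∑ j ∈ s, f j) := by
  classical
  show f i + ∑ j ∈ s, f j = ∑ j ∈ s, f j
  rw [← Finset.add_sum_erase s f hi, ← add_assoc, hK]

theorem natCast_eq_one (hK : ∀ a : K, a + a = a) (n : ℕ) (hn : 1 ≤ n) : ((n : ℕ) : K) = 1 := by
  induction n with
  | zero => omega
  | succ k ih =>
    rcases Nat.eq_zero_or_pos k with rfl | hk
    · simp
    · rw [Nat.cast_succ, ih hk, hK 1]

theorem idem_add_pow (hK : ∀ a : K, a + a = a) (a b : K) (N : ℕ) :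
    (a + b) ^ N = ∑ i ∈ Finset.range (N + 1), a ^ i * b ^ (N - i) := by
  rw [add_pow]
  refine Finset.sum_congr rfl fun i hi => ?_
  rw [natCast_eq_one hK _ (Nat.choose_pos (Finset.mem_range_succ_iff.1 hi)), mul_one]

theorem simple_nzd
    (hsimple : ∀ I : Set K, 0 ∈ I → (∀ a b, a ∈ I → b ∈ I → a + b ∈ I) →
      (∀ r a, a ∈ I → r * a ∈ I) → (∀ a b, a + b = b → b ∈ I → a ∈ I) →
      I = {0} ∨ I = Set.univ)
    {a b : K} (hab : a * b = 0) : a = 0 ∨ b = 0 := by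
  by_cases hb : b = 0
  · exact Or.inr hb
  left
  have := hsimple {c | c * b = 0} (by simp) (fun c c' hc hc' => by
      simp only [Set.mem_setOf_eq] at *; rw [add_mul, hc, hc', add_zero])
    (fun r c hc => by simp only [Set.mem_setOf_eq] at *; rw [mul_assoc, hc, mul_zero])
    (fun c c' hcc hc' => by
      simp only [Set.mem_setOf_eq] at *
      have : (c + c') * b = c' * b := by rw [hcc]
      rw [add_mul, hc', add_zero] at this
      exact this)
  rcases this with h | h
  · have : a ∈ {c | c * b = 0} := hab
    rw [h] at this; exact this
  · exfalso
    have : (1 : K) ∈ {c | c * b = 0} := by rw [h]; trivial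
    exact hb (by simpa using this)

theorem simple_pow_ne
    (hsimple : ∀ I : Set K, 0 ∈ I → (∀ a b, a ∈ I → b ∈ I → a + b ∈ I) →
      (∀ r a, a ∈ I → r * a ∈ I) → (∀ a b, a + b = b → b ∈ I → a ∈ I) →
      I = {0} ∨ I = Set.univ)
    {a : K} (h1 : (1 : K) ≠ 0) (ha : a ≠ 0) : ∀ n : ℕ, a ^ n ≠ 0
  | 0 => by rw [pow_zero]; exact h1
  | n + 1 => by
      rw [pow_succ]
      intro h
      rcases simple_nzd hsimple h with h' | h'
      · exact simple_pow_ne hsimple h1 ha n h'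
      · exact ha h'

variable {R : Type*} [CommSemiring R] [Algebra R K]

def GoodR (R : Type*) [CommSemiring R] [Algebra R K] (Q : Set (K × K)) : Prop :=
  (∀ a : K, (a, a) ∈ Q) ∧
  (∀ a b c : K, (a, b) ∈ Q → (b, c) ∈ Q → (a, c) ∈ Q) ∧
  (∀ a b c : K, (a, c) ∈ Q → (b, c) ∈ Q → (a + b, c) ∈ Q) ∧
  (∀ a b c : K, (a, b) ∈ Q → (a * c, b * c) ∈ Q) ∧
  (∀ a b : K, a + b = b → (a, b) ∈ Q) ∧
  (∀ r : R, (r • (1 : K), (1 : K)) ∈ Q)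

theorem goodr_congr {Q : Set (K × K)} {a b a' b' : K}
    (h : (a, b) ∈ Q) (ha : a = a') (hb : b = b') : (a', b') ∈ Q := ha ▸ hb ▸ h

theorem goodr_pow {Q : Set (K × K)} (hG : GoodR R Q) {a b : K} (h : (a, b) ∈ Q) :
    ∀ n : ℕ, (a ^ n, b ^ n) ∈ Q
  | 0 => goodr_congr (hG.1 1) (by rw [pow_zero]) (by rw [pow_zero])
  | n + 1 => by
      have s1 : (a ^ (n + 1), b * a ^ n) ∈ Q :=
        goodr_congr (hG.2.2.2.1 _ _ (a ^ n) h) (by ring) rfl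
      have s2 : (b * a ^ n, b ^ (n + 1)) ∈ Q :=
        goodr_congr (hG.2.2.2.1 _ _ b (goodr_pow hG h n)) (by ring) (by ring)
      exact hG.2.1 _ _ _ s1 s2

theorem goodr_sum {Q : Set (K × K)} (hG : GoodR R Q) {ι : Type*} (s : Finset ι) (f : ι → K)
    (e : K) (h : ∀ i ∈ s, (f i, e) ∈ Q) : ((∑ i ∈ s, f i), e) ∈ Q := by
  revert h
  induction s using Finset.cons_induction_on with
  | empty => intro _; rw [Finset.sum_empty]; exact hG.2.2.2.2.1 _ _ (zero_add e)
  | cons _ _ hni ih =>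
      intro h
      rw [Finset.sum_cons]
      exact hG.2.2.1 _ _ _ (h _ (Finset.mem_cons_self _ _))
        (ih fun i hi => h i (Finset.mem_cons_of_mem hi))

def extend (Q : Set (K × K)) (u v : K) : Set (K × K) :=
  {p | ∃ n : ℕ, (p.1 * v ^ n, p.2 * (u + v) ^ n) ∈ Q}

theorem extend_raise (hK : ∀ a : K, a + a = a) {Q : Set (K × K)} (hG : GoodR R Q)
    {u v c e : K} {n : ℕ} (h : (c * v ^ n, e * (u + v) ^ n) ∈ Q) (k : ℕ) :
    (c * v ^ (n + k), e * (u + v) ^ (n + k)) ∈ Q := by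
  have s1 : (c * v ^ (n + k), e * (u + v) ^ n * v ^ k) ∈ Q :=
    goodr_congr (hG.2.2.2.1 _ _ (v ^ k) h) (by rw [pow_add]; ring) rfl
  have s2 : lek (e * (u + v) ^ n * v ^ k) (e * (u + v) ^ (n + k)) := by
    have l1 : lek (v ^ k) ((u + v) ^ k) := lek_pow hK (lek_right hK u v) k
    exact lek_congr (lek_mul (e * (u + v) ^ n) l1) (by ring) (by rw [pow_add]; ring)
  exact hG.2.1 _ _ _ s1 (hG.2.2.2.2.1 _ _ s2)

theorem extend_good (hK : ∀ a : K, a + a = a) {Q : Set (K × K)} (hG : GoodR R Q) (u v : K) :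
    GoodR R (extend Q u v) := by
  refine ⟨?_, ?_, ?_, ?_, ?_, ?_⟩
  · exact fun a => ⟨0, goodr_congr (hG.1 (a * 1)) (by rw [pow_zero]) (by rw [pow_zero])⟩
  · rintro a b c ⟨n, h1⟩ ⟨m, h2⟩
    refine ⟨n + m, ?_⟩
    have s1 : (a * v ^ (n + m), b * (u + v) ^ n * v ^ m) ∈ Q :=
      goodr_congr (hG.2.2.2.1 _ _ (v ^ m) h1) (by rw [pow_add]; ring) rfl
    have s2 : (b * (u + v) ^ n * v ^ m, c * (u + v) ^ (n + m)) ∈ Q :=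
      goodr_congr (hG.2.2.2.1 _ _ ((u + v) ^ n) h2) (by ring) (by rw [pow_add]; ring)
    exact hG.2.1 _ _ _ s1 s2
  · rintro a b c ⟨n, h1⟩ ⟨m, h2⟩
    refine ⟨n + m, ?_⟩
    have h1' := extend_raise hK hG h1 m
    have h2' := extend_raise hK hG h2 n
    have h2'' : (b * v ^ (n + m), c * (u + v) ^ (n + m)) ∈ Q :=
      goodr_congr h2' (by rw [Nat.add_comm m n]) (by rw [Nat.add_comm m n])
    exact goodr_congr (hG.2.2.1 _ _ _ h1' h2'') (by rw [add_mul]) rfl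
  · rintro a b c ⟨n, h⟩
    exact ⟨n, goodr_congr (hG.2.2.2.1 _ _ c h) (by ring) (by ring)⟩
  · intro a b hab
    exact ⟨0, goodr_congr (hG.2.2.2.2.1 _ _ hab) (by rw [pow_zero, mul_one])
      (by rw [pow_zero, mul_one])⟩
  · intro r
    exact ⟨0, goodr_congr (hG.2.2.2.2.2 r) (by rw [pow_zero, mul_one]) (by rw [pow_zero, mul_one])⟩

theorem extend_subset {Q : Set (K × K)} (hG : GoodR R Q) (u v : K) : Q ⊆ extend Q u v := by
  rintro ⟨a, b⟩ h
  exact ⟨0, goodr_congr h (by rw [pow_zero, mul_one]) (by rw [pow_zero, mul_one])⟩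

theorem extend_mem (hK : ∀ a : K, a + a = a) {Q : Set (K × K)} (hG : GoodR R Q) (u v : K) :
    (u, v) ∈ extend Q u v := by
  refine ⟨1, hG.2.2.2.2.1 _ _ ?_⟩
  have : lek (u * v) (v * (u + v)) :=
    lek_congr (lek_left hK (u * v) (v * v)) rfl (by ring)
  exact lek_congr this (by rw [pow_one]) (by rw [pow_one])

end Construction

end S15

namespace S15

section Master

variable {K : Type u} [CommSemiring K] {R : Type*} [CommSemiring R] [Algebra R K]

theorem exists_gooddata
    (hK : ∀ a : K, a + a = a)
    (hsimple : ∀ I : Set K, 0 ∈ I → (∀ a b, a ∈ I → b ∈ I → a + b ∈ I) →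
      (∀ r a, a ∈ I → r * a ∈ I) → (∀ a b, a + b = b → b ∈ I → a ∈ I) →
      I = {0} ∨ I = Set.univ)
    (h1 : (1 : K) ≠ 0) (x : K)
    (hx : ∀ (D : K) (r : R), x * D + (1 + r • (1 : K)) * D = (1 + r • (1 : K)) * D → D = 0) :
    ∃ d : GoodData K, (∀ r : R, d.Q (r • (1 : K)) 1) ∧ ¬ d.Q x 1 := by
  classical
  have hnzd : ∀ {a b : K}, a * b = 0 → a = 0 ∨ b = 0 := fun h => simple_nzd hsimple h
  have hpne : ∀ {a : K}, a ≠ 0 → ∀ n : ℕ, a ^ n ≠ 0 := fun ha n => simple_pow_ne hsimple h1 ha n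
  set S : Set (Set (K × K)) :=
    {Q | GoodR R Q ∧ ((1 : K), (0 : K)) ∉ Q ∧ ∀ D : K, (x * D, D) ∈ Q → (D, (0 : K)) ∈ Q}
    with hSdef
  set Q0 : Set (K × K) :=
    {p | ∃ r : R, p.1 + (1 + r • (1 : K)) * p.2 = (1 + r • (1 : K)) * p.2} with hQ0def
  have hrho_mul : ∀ r s : R,
      (1 + r • (1 : K)) * (1 + s • (1 : K)) = 1 + (r + s + r * s) • (1 : K) := by
    intro r s
    calc (1 + r • (1 : K)) * (1 + s • (1 : K))
        = 1 + (r • (1 : K) + (s • (1 : K) + r • (1 : K) * s • (1 : K))) := by ring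
      _ = 1 + (r + s + r * s) • (1 : K) := by
          rw [smul_mul_smul_comm, mul_one, add_smul, add_smul, add_assoc]
  have hrho_add : ∀ r s : R,
      (1 + r • (1 : K)) + (1 + s • (1 : K)) = 1 + (r + s) • (1 : K) := by
    intro r s
    calc (1 + r • (1 : K)) + (1 + s • (1 : K))
        = (1 + 1) + (r • (1 : K) + s • (1 : K)) := by ring
      _ = 1 + (r + s) • (1 : K) := by rw [hK 1, add_smul]
  have hQ0good : GoodR R Q0 := by
    refine ⟨?_, ?_, ?_, ?_, ?_, ?_⟩
    · intro a
      exact ⟨0, by rw [zero_smul, add_zero, one_mul]; exact hK a⟩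
    · rintro a b c ⟨r, h1'⟩ ⟨s, h2'⟩
      refine ⟨r + s + r * s, ?_⟩
      have l1 : lek a ((1 + r • (1 : K)) * b) := h1'
      have l2 : lek b ((1 + s • (1 : K)) * c) := h2'
      have l3 : lek ((1 + r • (1 : K)) * b)
          ((1 + (r + s + r * s) • (1 : K)) * c) := by
        have := lek_mul (1 + r • (1 : K)) l2
        exact lek_congr this (by ring) (by rw [← hrho_mul]; ring)
      exact lek_trans l1 l3
    · rintro a b c ⟨r, h1'⟩ ⟨s, h2'⟩
      refine ⟨r + s, ?_⟩
      have l1 : lek a ((1 + r • (1 : K)) * c) := h1'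
      have l2 : lek b ((1 + s • (1 : K)) * c) := h2'
      have l3 : lek ((1 + r • (1 : K)) * c) ((1 + (r + s) • (1 : K)) * c) := by
        have := lek_left hK ((1 + r • (1 : K)) * c) ((1 + s • (1 : K)) * c)
        exact lek_congr this rfl (by rw [← hrho_add]; ring)
      have l4 : lek ((1 + s • (1 : K)) * c) ((1 + (r + s) • (1 : K)) * c) := by
        have := lek_right hK ((1 + r • (1 : K)) * c) ((1 + s • (1 : K)) * c)
        exact lek_congr this rfl (by rw [← hrho_add]; ring)
      exact lek_add (lek_trans l1 l3) (lek_trans l2 l4)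
    · rintro a b c ⟨r, h⟩
      exact ⟨r, lek_congr (lek_mul c h) rfl (by ring)⟩
    · intro a b hab
      exact ⟨0, lek_congr hab rfl (by rw [zero_smul, add_zero, one_mul])⟩
    · intro r
      refine ⟨r, ?_⟩
      show r • (1 : K) + (1 + r • (1 : K)) * 1 = (1 + r • (1 : K)) * 1
      rw [mul_one, ← add_assoc, add_comm (r • (1 : K)) 1, add_assoc, hK (r • (1 : K))]
  have hQ0S : Q0 ∈ S := by
    refine ⟨hQ0good, ?_, ?_⟩
    · rintro ⟨r, h⟩
      rw [mul_zero, add_zero] at h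
      exact h1 h
    · rintro D ⟨r, h⟩
      have : D = 0 := hx D r h
      exact ⟨0, by simp [this]⟩
  obtain ⟨Qm, hQ0m, hmax⟩ := zorn_subset_nonempty S (by
    intro c hcS hchain hcne
    refine ⟨⋃₀ c, ⟨⟨?_, ?_, ?_, ?_, ?_, ?_⟩, ?_, ?_⟩, fun s hs => Set.subset_sUnion_of_mem hs⟩
    · intro a
      obtain ⟨Q, hQ⟩ := hcne
      exact ⟨Q, hQ, (hcS hQ).1.1 a⟩
    · rintro a b c' ⟨Q1, hQ1, h1'⟩ ⟨Q2, hQ2, h2'⟩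
      rcases hchain.total hQ1 hQ2 with h | h
      · exact ⟨Q2, hQ2, (hcS hQ2).1.2.1 _ _ _ (h h1') h2'⟩
      · exact ⟨Q1, hQ1, (hcS hQ1).1.2.1 _ _ _ h1' (h h2')⟩
    · rintro a b c' ⟨Q1, hQ1, h1'⟩ ⟨Q2, hQ2, h2'⟩
      rcases hchain.total hQ1 hQ2 with h | h
      · exact ⟨Q2, hQ2, (hcS hQ2).1.2.2.1 _ _ _ (h h1') h2'⟩
      · exact ⟨Q1, hQ1, (hcS hQ1).1.2.2.1 _ _ _ h1' (h h2')⟩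
    · rintro a b c' ⟨Q1, hQ1, h1'⟩
      exact ⟨Q1, hQ1, (hcS hQ1).1.2.2.2.1 _ _ _ h1'⟩
    · intro a b hab
      obtain ⟨Q, hQ⟩ := hcne
      exact ⟨Q, hQ, (hcS hQ).1.2.2.2.2.1 _ _ hab⟩
    · intro r
      obtain ⟨Q, hQ⟩ := hcne
      exact ⟨Q, hQ, (hcS hQ).1.2.2.2.2.2 r⟩
    · rintro ⟨Q, hQ, h⟩
      exact (hcS hQ).2.1 h
    · rintro D ⟨Q, hQ, h⟩
      exact ⟨Q, hQ, (hcS hQ).2.2 D h⟩) Q0 hQ0S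
  have hG : GoodR R Qm := hmax.1.1
  have hI1 : ((1 : K), (0 : K)) ∉ Qm := hmax.1.2.1
  have hI2 : ∀ D : K, (x * D, D) ∈ Qm → (D, (0 : K)) ∈ Qm := hmax.1.2.2
  have hker : ∀ c : K, (c, (0 : K)) ∈ Qm → c = 0 := by
    intro c hc
    rcases hsimple {z | (z, (0 : K)) ∈ Qm} (hG.1 0)
      (fun a b ha hb => hG.2.2.1 _ _ _ ha hb)
      (fun r a ha => goodr_congr (hG.2.2.2.1 _ _ r ha) (by ring) (by ring))
      (fun a b hab hb => hG.2.1 _ _ _ (hG.2.2.2.2.1 _ _ hab) hb) with h | h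
    · have : c ∈ {z | (z, (0 : K)) ∈ Qm} := hc
      rw [h] at this
      exact this
    · exfalso
      have : (1 : K) ∈ {z | (z, (0 : K)) ∈ Qm} := by rw [h]; trivial
      exact hI1 this
  -- dichotomy from maximality
  have hdich : ∀ u w : K, (u, w) ∉ Qm →
      w = 0 ∨ ∃ D : K, ∃ n : ℕ, 1 ≤ n ∧ (x * (D * w ^ n), D * (u + w) ^ n) ∈ Qm ∧
        ∀ m : ℕ, D * w ^ m ≠ 0 := by
    intro u w huw
    have hEg : GoodR R (extend Qm u w) := extend_good hK hG u w
    have hEnotS : extend Qm u w ∉ S := fun hES =>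
      huw (hmax.2 hES (extend_subset hG u w) (extend_mem hK hG u w))
    by_cases hE1 : ((1 : K), (0 : K)) ∈ extend Qm u w
    · left
      obtain ⟨n, hn⟩ := hE1
      have : (w ^ n, (0 : K)) ∈ Qm := goodr_congr hn (by rw [one_mul]) (by rw [zero_mul])
      have hwn : w ^ n = 0 := hker _ this
      by_contra hw0
      exact hpne hw0 n hwn
    · right
      have hE2 : ¬ ∀ D : K, (x * D, D) ∈ extend Qm u w → (D, (0 : K)) ∈ extend Qm u w :=
        fun hA => hEnotS ⟨hEg, hE1, hA⟩
      push_neg at hE2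
      obtain ⟨D, hxD, hD0⟩ := hE2
      obtain ⟨n, hn⟩ := hxD
      have hDne : ∀ m : ℕ, D * w ^ m ≠ 0 := by
        intro m h0
        exact hD0 ⟨m, goodr_congr (hG.1 (0 : K)) (by rw [← h0]) (by rw [zero_mul])⟩
      rcases Nat.eq_zero_or_pos n with rfl | hn1
      · exfalso
        have : (x * D, D) ∈ Qm :=
          goodr_congr hn (by rw [pow_zero, mul_one]) (by rw [pow_zero, mul_one])
        have hD := hker _ (hI2 _ this)
        exact hDne 0 (by rw [hD, zero_mul])
      · exact ⟨D, n, hn1, goodr_congr hn (by ring) rfl, hDne⟩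
  -- key combination step
  have hcombine : ∀ a b : K, ∀ D E : K, ∀ n m : ℕ, 1 ≤ n → 1 ≤ m →
      (x * (D * b ^ n), D * (a + b) ^ n) ∈ Qm →
      (x * (E * a ^ m), E * (a + b) ^ m) ∈ Qm →
      (∀ k : ℕ, D * b ^ k ≠ 0) → (∀ k : ℕ, E * a ^ k ≠ 0) → False := by
    intro a b D E n m hn1 hm1 hD hE hDne hEne
    set N := n + m - 1 with hNdef
    have hmN : m ≤ N := by omega
    have hnN : n ≤ N := by omega
    have key : (x * (D * E * (a + b) ^ N), D * E * (a + b) ^ N) ∈ Qm := by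
      have hexp : x * (D * E * (a + b) ^ N) =
          ∑ i ∈ Finset.range (N + 1), x * (D * E * (a ^ i * b ^ (N - i))) := by
        rw [idem_add_pow hK a b N, Finset.mul_sum, Finset.mul_sum]
      rw [hexp]
      refine goodr_sum hG _ _ _ (fun i hi => ?_)
      have hiN : i ≤ N := Finset.mem_range_succ_iff.1 hi
      by_cases him : m ≤ i
      · have s1 : (x * (E * a ^ m) * (D * a ^ (i - m) * b ^ (N - i)),
            E * (a + b) ^ m * (D * a ^ (i - m) * b ^ (N - i))) ∈ Qm :=
          hG.2.2.2.1 _ _ _ hE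
        have e1 : x * (E * a ^ m) * (D * a ^ (i - m) * b ^ (N - i)) =
            x * (D * E * (a ^ i * b ^ (N - i))) := by
          rw [show a ^ i = a ^ m * a ^ (i - m) by rw [← pow_add, Nat.add_sub_cancel' him]]
          ring
        have s2 : lek (E * (a + b) ^ m * (D * a ^ (i - m) * b ^ (N - i)))
            (D * E * (a + b) ^ N) := by
          have l1 : lek (a ^ (i - m) * b ^ (N - i)) ((a + b) ^ (N - m)) := by
            have := lek_mul2 (lek_pow hK (lek_left hK a b) (i - m))
              (lek_pow hK (lek_right hK a b) (N - i))
            exact lek_congr this rfl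
              (by rw [← pow_add, show (i - m) + (N - i) = N - m by omega])
          exact lek_congr (lek_mul (E * (a + b) ^ m * D) l1) (by ring)
            (by rw [show (a + b) ^ N = (a + b) ^ m * (a + b) ^ (N - m)
                  by rw [← pow_add, Nat.add_sub_cancel' hmN]]; ring)
        exact hG.2.1 _ _ _ (goodr_congr s1 e1 rfl) (hG.2.2.2.2.1 _ _ s2)
      · have hin : n ≤ N - i := by omega
        have s1 : (x * (D * b ^ n) * (E * a ^ i * b ^ (N - i - n)),
            D * (a + b) ^ n * (E * a ^ i * b ^ (N - i - n))) ∈ Qm :=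
          hG.2.2.2.1 _ _ _ hD
        have e1 : x * (D * b ^ n) * (E * a ^ i * b ^ (N - i - n)) =
            x * (D * E * (a ^ i * b ^ (N - i))) := by
          rw [show b ^ (N - i) = b ^ n * b ^ (N - i - n)
            by rw [← pow_add, Nat.add_sub_cancel' hin]]
          ring
        have s2 : lek (D * (a + b) ^ n * (E * a ^ i * b ^ (N - i - n)))
            (D * E * (a + b) ^ N) := by
          have l1 : lek (a ^ i * b ^ (N - i - n)) ((a + b) ^ (N - n)) := by
            have := lek_mul2 (lek_pow hK (lek_left hK a b) i)
              (lek_pow hK (lek_right hK a b) (N - i - n))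
            exact lek_congr this rfl
              (by rw [← pow_add, show i + (N - i - n) = N - n by omega])
          exact lek_congr (lek_mul (D * (a + b) ^ n * E) l1) (by ring)
            (by rw [show (a + b) ^ N = (a + b) ^ n * (a + b) ^ (N - n)
                  by rw [← pow_add, Nat.add_sub_cancel' hnN]]; ring)
        exact hG.2.1 _ _ _ (goodr_congr s1 e1 rfl) (hG.2.2.2.2.1 _ _ s2)
    have hz : D * E * (a + b) ^ N = 0 := hker _ (hI2 _ key)
    have hterm : lek (D * E * (a ^ m * b ^ (N - m))) (D * E * (a + b) ^ N) := by
      have l : lek (a ^ m * b ^ (N - m)) ((a + b) ^ N) := by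
        rw [idem_add_pow hK a b N]
        exact lek_sum (f := fun i => a ^ i * b ^ (N - i)) hK (Finset.mem_range_succ_iff.2 hmN)
      exact lek_congr (lek_mul (D * E) l) (by ring) (by ring)
    rw [hz] at hterm
    have ht0 : D * E * (a ^ m * b ^ (N - m)) = 0 := by
      have := hterm
      show _
      rw [show D * E * (a ^ m * b ^ (N - m)) =
        D * E * (a ^ m * b ^ (N - m)) + 0 from (add_zero _).symm]
      exact this
    have ht1 : (E * a ^ m) * (D * b ^ (N - m)) = 0 := by rw [← ht0]; ring
    rcases hnzd ht1 with h' | h'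
    · exact hEne m h'
    · exact hDne (N - m) h'
  have htot : ∀ a b : K, (a, b) ∈ Qm ∨ (b, a) ∈ Qm := by
    intro a b
    by_contra hcon
    push_neg at hcon
    obtain ⟨hab, hba⟩ := hcon
    have h1ab : (a + b, b) ∉ Qm :=
      fun h => hab (hG.2.1 _ _ _ (hG.2.2.2.2.1 _ _ (lek_left hK a b)) h)
    have h1ba : (a + b, a) ∉ Qm :=
      fun h => hba (hG.2.1 _ _ _ (hG.2.2.2.2.1 _ _ (lek_right hK a b)) h)
    rcases hdich (a + b) b h1ab with hb0 | ⟨D, n, hn1, hD, hDne⟩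
    · exact hba (by rw [hb0]; exact hG.2.2.2.2.1 _ _ (zero_add a))
    rcases hdich (a + b) a h1ba with ha0 | ⟨E, m, hm1, hE, hEne⟩
    · exact hab (by rw [ha0]; exact hG.2.2.2.2.1 _ _ (zero_add b))
    rw [show (a + b) + b = a + b by rw [add_assoc, hK b]] at hD
    rw [show (a + b) + a = a + b by
      rw [add_comm a b, add_assoc, hK a]] at hE
    exact hcombine a b D E n m hn1 hm1 hD hE hDne hEne
  have hcanc : ∀ a b c : K, (a * c, b * c) ∈ Qm → c ≠ 0 → (a, b) ∈ Qm := by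
    intro a b c hac hc
    by_contra hab
    have h1ab : (a + b, b) ∉ Qm :=
      fun h => hab (hG.2.1 _ _ _ (hG.2.2.2.2.1 _ _ (lek_left hK a b)) h)
    rcases hdich (a + b) b h1ab with hb0 | ⟨D, n, hn1, hD, hDne⟩
    · rw [hb0, zero_mul] at hac
      have : a * c = 0 := hker _ hac
      rcases hnzd this with h' | h'
      · exact hab (by rw [h', hb0]; exact hG.1 0)
      · exact hc h'
    rw [show (a + b) + b = a + b by rw [add_assoc, hK b]] at hD
    have hsum : (a * c + b * c, b * c) ∈ Qm := hG.2.2.1 _ _ _ hac (hG.1 _)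
    have hpow : ((a * c + b * c) ^ n, (b * c) ^ n) ∈ Qm := goodr_pow hG hsum n
    have s1 : (x * (D * (b * c) ^ n), D * (a + b) ^ n * c ^ n) ∈ Qm :=
      goodr_congr (hG.2.2.2.1 _ _ (c ^ n) hD) (by rw [mul_pow]; ring) rfl
    have s2 : (D * (a + b) ^ n * c ^ n, D * (b * c) ^ n) ∈ Qm := by
      have := hG.2.2.2.1 _ _ D hpow
      refine goodr_congr this ?_ (by ring)
      rw [show a * c + b * c = (a + b) * c from (add_mul a b c).symm, mul_pow]
      ring
    have key := hG.2.1 _ _ _ s1 s2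
    have hz : D * (b * c) ^ n = 0 := hker _ (hI2 _ key)
    have : (D * b ^ n) * c ^ n = 0 := by rw [← hz, mul_pow]; ring
    rcases hnzd this with h' | h'
    · exact hDne n h'
    · exact hpne hc n h'
  refine ⟨⟨fun a b => (a, b) ∈ Qm, hG.1,
    @fun a b c h h' => hG.2.1 a b c h h',
    @fun a b c h h' => hG.2.2.1 a b c h h',
    @fun a b c h => hG.2.2.2.1 a b c h,
    @fun a b h => hG.2.2.2.2.1 a b h,
    htot,
    @fun a b c h hc => hcanc a b c h hc,
    @fun a h => hker a h,
    @fun a b h => hnzd h,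
    h1⟩, ?_, ?_⟩
  · intro r
    exact hQ0m (hQ0good.2.2.2.2.2 r)
  · intro hx1
    have : (x * 1, (1 : K)) ∈ Qm := goodr_congr hx1 (by rw [mul_one]) rfl
    exact hI1 (hI2 1 this)

end Master

end S15

open S15

/-- Let `R` be an idempotent semiring, `K` a simple `R`-algebra (an
idempotent semiring), `x ∈ K`.  Then `x` is quasiintegral over `R` iff every
homomorphism `v : K → Γ_max` (for a linearly ordered abelian group `Γ`) with
`v (r • 1) ≤ 1` for all `r ∈ R` also satisfies `v x ≤ 1`. -/
theorem statement15 {R : Type*} {K : Type u} [CommSemiring R] [CommSemiring K]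
    [Algebra R K]
    (hR : ∀ r : R, r + r = r) (hK : ∀ a : K, a + a = a)
    (hsimple : ∀ I : Set K,
      0 ∈ I →
      (∀ a b, a ∈ I → b ∈ I → a + b ∈ I) →
      (∀ r a, a ∈ I → r * a ∈ I) →
      (∀ a b, a + b = b → b ∈ I → a ∈ I) →
      I = {0} ∨ I = Set.univ)
    (x : K) :
    IsQuasiIntegralOne R x ↔
      ∀ (Γ : Type u) [CommGroup Γ] [LinearOrder Γ] [IsOrderedMonoid Γ] (v : K → WithZero Γ),
        v 0 = 0 → v 1 = 1 → (∀ a b, v (a * b) = v a * v b) →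
        (∀ a b, v (a + b) = max (v a) (v b)) →
        (∀ r : R, v (r • (1 : K)) ≤ 1) → v x ≤ 1 := by
  constructor
  · -- forward direction
    rintro ⟨M, hM0, hMadd, hMmul, ⟨m₀, hm₀M, hfin⟩, hfaith⟩ Γ _ _ _ v hv0 hv1 hvmul hvadd hvR
    by_cases hx0 : x = 0
    · rw [hx0, hv0]; exact WithZero.zero_le _
    have hxS : x ∈ satGen R x := Set.mem_sInter.2 fun S hS => hS.2.1
    have hkerv : ∀ a : K, v a = 0 → a = 0 := by
      intro a ha
      rcases hsimple {z | v z = 0} hv0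
        (fun a b ha hb => by
          have ha' : v a = 0 := ha
          have hb' : v b = 0 := hb
          show v (a + b) = 0
          rw [hvadd, ha', hb', max_self])
        (fun r a ha => by
          have ha' : v a = 0 := ha
          show v (r * a) = 0
          rw [hvmul, ha', mul_zero])
        (fun a b hab hb => by
          have hb' : v b = 0 := hb
          show v a = 0
          have h := hvadd a b
          rw [hab, hb'] at h
          have hle : v a ≤ 0 := by
            calc v a ≤ max (v a) 0 := le_max_left _ _
              _ = 0 := h.symm
          exact le_antisymm hle (WithZero.zero_le _)) with h | h
      · have : a ∈ {z | v z = 0} := ha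
        rw [h] at this; exact this
      · exfalso
        have : (1 : K) ∈ {z | v z = 0} := by rw [h]; trivial
        have h10 : v 1 = 0 := this
        rw [hv1] at h10
        exact one_ne_zero h10
    obtain ⟨m, hmM, hxm⟩ := hfaith x hxS hx0
    have hm₀ne : m₀ ≠ 0 := by
      intro h0
      obtain ⟨r, hr⟩ := hfin m hmM
      rw [h0, smul_zero, add_zero] at hr
      exact hxm (by rw [hr, mul_zero])
    obtain ⟨r, hr⟩ := hfin (x * m₀) (hMmul x hxS m₀ hm₀M)
    have h1' : v (x * m₀) ≤ v (r • m₀) := by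
      have h := hvadd (x * m₀) (r • m₀)
      rw [hr] at h
      calc v (x * m₀) ≤ max (v (x * m₀)) (v (r • m₀)) := le_max_left _ _
        _ = v (r • m₀) := h.symm
    have h2' : v (r • m₀) ≤ v m₀ := by
      have e : r • m₀ = (r • (1 : K)) * m₀ := by rw [smul_mul_assoc, one_mul]
      rw [e, hvmul]
      calc v (r • (1 : K)) * v m₀ ≤ 1 * v m₀ := mul_le_mul_left (hvR r) _
        _ = v m₀ := one_mul _
    have h3' : v x * v m₀ ≤ v m₀ := by
      rw [← hvmul]; exact le_trans h1' h2'
    have hvm₀ : v m₀ ≠ 0 := fun h => hm₀ne (hkerv _ h)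
    calc v x = v x * v m₀ * (v m₀)⁻¹ := by rw [mul_assoc, mul_inv_cancel₀ hvm₀, mul_one]
      _ ≤ v m₀ * (v m₀)⁻¹ := mul_le_mul_left h3' _
      _ = 1 := mul_inv_cancel₀ hvm₀
  · -- backward direction
    intro hv
    by_cases h1 : (1 : K) = 0
    · refine ⟨{0}, rfl, ?_, ?_, ⟨0, rfl, ?_⟩, ?_⟩
      · intro a b ha hb
        rw [Set.mem_singleton_iff] at ha hb ⊢
        rw [ha, hb, add_zero]
      · intro t ht m hm
        rw [Set.mem_singleton_iff] at hm ⊢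
        rw [hm, mul_zero]
      · intro y hy
        rw [Set.mem_singleton_iff] at hy
        exact ⟨1, by rw [hy, smul_zero, add_zero]⟩
      · intro t ht htne
        exfalso
        apply htne
        calc t = t * 1 := (mul_one t).symm
          _ = t * 0 := by rw [h1]
          _ = 0 := mul_zero t
    by_contra hnqi
    have honeS : (1 : K) ∈ satGen R x := Set.mem_sInter.2 fun S hS => hS.1.2.1
    have haddS : ∀ a b : K, a ∈ satGen R x → b ∈ satGen R x → a + b ∈ satGen R x :=
      fun a b ha hb => Set.mem_sInter.2 fun S hS =>
        hS.1.2.2.1 a b (Set.mem_sInter.1 ha S hS) (Set.mem_sInter.1 hb S hS)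
    have hmulS : ∀ a b : K, a ∈ satGen R x → b ∈ satGen R x → a * b ∈ satGen R x :=
      fun a b ha hb => Set.mem_sInter.2 fun S hS =>
        hS.1.2.2.2.1 a b (Set.mem_sInter.1 ha S hS) (Set.mem_sInter.1 hb S hS)
    have hx : ∀ (D : K) (r : R),
        x * D + (1 + r • (1 : K)) * D = (1 + r • (1 : K)) * D → D = 0 := by
      intro D r hxD
      by_contra hD0
      apply hnqi
      have hsub : satGen R x ⊆
          {t : K | ∃ r' : R, t * D + (1 + r' • (1 : K)) * D = (1 + r' • (1 : K)) * D} := by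
        apply Set.sInter_subset_of_mem
        refine ⟨⟨⟨0, by simp⟩, ⟨0, by simp [hK D]⟩, ?_, ?_, ?_⟩, ⟨r, hxD⟩, ?_⟩
        · rintro t₁ t₂ ⟨r₁, e₁⟩ ⟨r₂, e₂⟩
          refine ⟨r₁ + r₂, ?_⟩
          have l1 : lek (t₁ * D) ((1 + r₁ • (1 : K)) * D) := e₁
          have l2 : lek (t₂ * D) ((1 + r₂ • (1 : K)) * D) := e₂
          have hsum : (1 + r₁ • (1 : K)) + (1 + r₂ • (1 : K)) = 1 + (r₁ + r₂) • (1 : K) := by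
            calc (1 + r₁ • (1 : K)) + (1 + r₂ • (1 : K))
                = (1 + 1) + (r₁ • (1 : K) + r₂ • (1 : K)) := by ring
              _ = 1 + (r₁ + r₂) • (1 : K) := by rw [hK 1, add_smul]
          have l3 : lek ((1 + r₁ • (1 : K)) * D) ((1 + (r₁ + r₂) • (1 : K)) * D) := by
            have := lek_left hK ((1 + r₁ • (1 : K)) * D) ((1 + r₂ • (1 : K)) * D)
            exact lek_congr this rfl (by rw [← hsum]; ring)
          have l4 : lek ((1 + r₂ • (1 : K)) * D) ((1 + (r₁ + r₂) • (1 : K)) * D) := by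
            have := lek_right hK ((1 + r₁ • (1 : K)) * D) ((1 + r₂ • (1 : K)) * D)
            exact lek_congr this rfl (by rw [← hsum]; ring)
          have := lek_add (lek_trans l1 l3) (lek_trans l2 l4)
          exact lek_congr this (by rw [add_mul]) rfl
        · rintro t₁ t₂ ⟨r₁, e₁⟩ ⟨r₂, e₂⟩
          refine ⟨r₁ + r₂ + r₁ * r₂, ?_⟩
          have l1 : lek (t₁ * D) ((1 + r₁ • (1 : K)) * D) := e₁
          have l2 : lek (t₂ * D) ((1 + r₂ • (1 : K)) * D) := e₂
          have hprod : (1 + r₁ • (1 : K)) * (1 + r₂ • (1 : K))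
              = 1 + (r₁ + r₂ + r₁ * r₂) • (1 : K) := by
            calc (1 + r₁ • (1 : K)) * (1 + r₂ • (1 : K))
                = 1 + (r₁ • (1 : K) + (r₂ • (1 : K) + r₁ • (1 : K) * r₂ • (1 : K))) := by ring
              _ = 1 + (r₁ + r₂ + r₁ * r₂) • (1 : K) := by
                  rw [smul_mul_smul_comm, mul_one, add_smul, add_smul, add_assoc]
          have l3 : lek (t₁ * t₂ * D) (t₁ * ((1 + r₂ • (1 : K)) * D)) :=
            lek_congr (lek_mul t₁ l2) (by ring) (by ring)
          have l4 : lek (t₁ * ((1 + r₂ • (1 : K)) * D))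
              ((1 + (r₁ + r₂ + r₁ * r₂) • (1 : K)) * D) := by
            have := lek_mul (1 + r₂ • (1 : K)) l1
            exact lek_congr this (by ring) (by rw [← hprod]; ring)
          exact lek_trans l3 l4
        · rintro a b hab ⟨r', e'⟩
          exact ⟨r', lek_trans (lek_mul D hab) e'⟩
        · rintro t ⟨r', rfl⟩
          refine ⟨r', ?_⟩
          have e : algebraMap R K r' * D = r' • D := (Algebra.smul_def r' D).symm
          have e2 : (1 + r' • (1 : K)) * D = D + r' • D := by
            rw [add_mul, one_mul, smul_mul_assoc, one_mul]
          rw [e, e2]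
          exact lek_right hK D (r' • D)
      refine ⟨{a | ∃ t ∈ satGen R x, a + t * D = t * D}, ⟨1, honeS, by rw [zero_add]⟩,
        ?_, ?_, ⟨D, ⟨1, honeS, by rw [one_mul]; exact hK D⟩, ?_⟩, ?_⟩
      · rintro a b ⟨t₁, ht₁, e₁⟩ ⟨t₂, ht₂, e₂⟩
        refine ⟨t₁ + t₂, haddS _ _ ht₁ ht₂, ?_⟩
        have l1 : lek a (t₁ * D) := e₁
        have l2 : lek b (t₂ * D) := e₂
        have l3 : lek (t₁ * D) ((t₁ + t₂) * D) := lek_mul D (lek_left hK t₁ t₂)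
        have l4 : lek (t₂ * D) ((t₁ + t₂) * D) := lek_mul D (lek_right hK t₁ t₂)
        exact lek_add (lek_trans l1 l3) (lek_trans l2 l4)
      · rintro t ht a ⟨t', ht', e'⟩
        refine ⟨t * t', hmulS _ _ ht ht', ?_⟩
        have l1 : lek a (t' * D) := e'
        exact lek_congr (lek_mul t l1) (by ring) (by ring)
      · intro y hy
        obtain ⟨t, ht, e⟩ := hy
        obtain ⟨r', er⟩ := hsub ht
        refine ⟨1 + r', ?_⟩
        have e3 : ((1 + r' : R)) • D = (1 + r' • (1 : K)) * D := by
          rw [add_smul, one_smul, add_mul, one_mul, smul_mul_assoc, one_mul]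
        rw [e3]
        exact lek_trans (show lek y (t * D) from e) er
      · intro t ht htne
        refine ⟨D, ⟨1, honeS, by rw [one_mul]; exact hK D⟩, ?_⟩
        exact fun h => (simple_nzd hsimple h).elim htne hD0
    obtain ⟨d, hdscal, hdx1⟩ := exists_gooddata hK hsimple h1 x hx
    have hval := hv d.Gamma d.val d.val_zero d.val_one d.val_mul
      (fun a b => d.val_add a b hK)
      (fun r => by rw [← d.val_one]; exact (d.val_le_iff _ _).2 (hdscal r))
    rw [← d.val_one] at hval
    exact hdx1 ((d.val_le_iff x 1).1 hval)
end

section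
/- Let R be an idempotent semiring and S ⊆ R × R. If every finite subset of S is admissible, then S is admissible. -/
set_option linter.unusedSectionVars false

universe u

section UP

variable {ι : Type u} (U : Ultrafilter ι) (Γ : ι → Type u)
  [∀ i, CommGroup (Γ i)] [∀ i, LinearOrder (Γ i)] [∀ i, IsOrderedMonoid (Γ i)]

def uRel (a b : ∀ i, Γ i) : Prop := {i | a i = b i} ∈ U

def UProd : Type u := Quot (uRel U Γ)

variable {U Γ}

def UProd.mk (a : ∀ i, Γ i) : UProd U Γ := Quot.mk _ a

lemma UProd.sound {a b : ∀ i, Γ i} (h : {i | a i = b i} ∈ U) :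
    UProd.mk (U := U) a = UProd.mk b := Quot.sound h

lemma UProd.sound' {a b : ∀ i, Γ i} (h : ∀ i, a i = b i) :
    UProd.mk (U := U) a = UProd.mk b :=
  UProd.sound (Filter.univ_mem' h)

lemma UProd.ind {p : UProd U Γ → Prop} (h : ∀ a, p (UProd.mk a)) : ∀ q, p q :=
  Quot.ind h

instance : Mul (UProd U Γ) :=
  ⟨Quot.map₂ (fun a b i => a i * b i)
    (fun a b₁ b₂ hb => U.mem_of_superset hb fun i hi => by
      simp only [Set.mem_setOf_eq] at hi ⊢; rw [hi])
    (fun a₁ a₂ b ha => U.mem_of_superset ha fun i hi => by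
      simp only [Set.mem_setOf_eq] at hi ⊢; rw [hi])⟩

instance : One (UProd U Γ) := ⟨UProd.mk fun _ => 1⟩

instance : Inv (UProd U Γ) :=
  ⟨Quot.map (fun a i => (a i)⁻¹)
    (fun a b h => U.mem_of_superset h fun i hi => by
      simp only [Set.mem_setOf_eq] at hi ⊢; rw [hi])⟩

@[simp] lemma UProd.mk_mul (a b : ∀ i, Γ i) :
    UProd.mk (U := U) a * UProd.mk b = UProd.mk fun i => a i * b i := rfl

@[simp] lemma UProd.one_def : (1 : UProd U Γ) = UProd.mk fun _ => 1 := rfl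

@[simp] lemma UProd.mk_inv (a : ∀ i, Γ i) :
    (UProd.mk (U := U) a)⁻¹ = UProd.mk fun i => (a i)⁻¹ := rfl

instance : CommGroup (UProd U Γ) where
  mul_assoc := by
    refine UProd.ind fun a => UProd.ind fun b => UProd.ind fun c => ?_
    simp only [UProd.mk_mul]
    exact UProd.sound' fun i => mul_assoc _ _ _
  one_mul := by
    refine UProd.ind fun a => ?_
    simp only [UProd.one_def, UProd.mk_mul]
    exact UProd.sound' fun i => one_mul _
  mul_one := by
    refine UProd.ind fun a => ?_
    simp only [UProd.one_def, UProd.mk_mul]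
    exact UProd.sound' fun i => mul_one _
  inv_mul_cancel := by
    refine UProd.ind fun a => ?_
    simp only [UProd.mk_inv, UProd.mk_mul]
    exact UProd.sound' fun i => inv_mul_cancel _
  mul_comm := by
    refine UProd.ind fun a => UProd.ind fun b => ?_
    simp only [UProd.mk_mul]
    exact UProd.sound' fun i => mul_comm _ _

instance : LE (UProd U Γ) :=
  ⟨Quot.lift₂ (fun a b => {i | a i ≤ b i} ∈ U)
    (fun a b₁ b₂ hb => propext ⟨
      fun h => U.mem_of_superset (U.inter_mem h hb) fun i ⟨h1, h2⟩ => by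
        simp only [Set.mem_setOf_eq] at *; rw [← h2]; exact h1,
      fun h => U.mem_of_superset (U.inter_mem h hb) fun i ⟨h1, h2⟩ => by
        simp only [Set.mem_setOf_eq] at *; rw [h2]; exact h1⟩)
    (fun a₁ a₂ b ha => propext ⟨
      fun h => U.mem_of_superset (U.inter_mem h ha) fun i ⟨h1, h2⟩ => by
        simp only [Set.mem_setOf_eq] at *; rw [← h2]; exact h1,
      fun h => U.mem_of_superset (U.inter_mem h ha) fun i ⟨h1, h2⟩ => by
        simp only [Set.mem_setOf_eq] at *; rw [h2]; exact h1⟩)⟩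

@[simp] lemma UProd.mk_le_mk {a b : ∀ i, Γ i} :
    UProd.mk (U := U) a ≤ UProd.mk b ↔ {i | a i ≤ b i} ∈ U := Iff.rfl

noncomputable instance : LinearOrder (UProd U Γ) where
  le_refl := UProd.ind fun a => by
    simp only [UProd.mk_le_mk]
    exact U.mem_of_superset U.univ_mem fun i _ => le_refl _
  le_trans := by
    refine UProd.ind fun a => UProd.ind fun b => UProd.ind fun c => ?_
    simp only [UProd.mk_le_mk]
    exact fun h1 h2 => U.mem_of_superset (U.inter_mem h1 h2)
      fun i ⟨h1, h2⟩ => le_trans h1 h2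
  le_antisymm := by
    refine UProd.ind fun a => UProd.ind fun b => ?_
    simp only [UProd.mk_le_mk]
    exact fun h1 h2 => UProd.sound <| U.mem_of_superset (U.inter_mem h1 h2)
      fun i ⟨h1, h2⟩ => le_antisymm h1 h2
  le_total := by
    refine UProd.ind fun a => UProd.ind fun b => ?_
    simp only [UProd.mk_le_mk]
    rcases U.em {i | a i ≤ b i} with h | h
    · exact Or.inl h
    · exact Or.inr <| U.mem_of_superset h fun i hi => le_of_not_ge hi
  toDecidableLE := fun _ _ => Classical.dec _

lemma UProd.mk_lt_mk {a b : ∀ i, Γ i} :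
    UProd.mk (U := U) a < UProd.mk b ↔ {i | a i < b i} ∈ U := by
  rw [lt_iff_le_not_ge, UProd.mk_le_mk, UProd.mk_le_mk]
  constructor
  · rintro ⟨h1, h2⟩
    rw [← Ultrafilter.compl_mem_iff_notMem] at h2
    exact U.mem_of_superset h2 fun i hi => lt_of_not_ge hi
  · intro h
    refine ⟨U.mem_of_superset h fun i hi => le_of_lt hi, fun h2 => ?_⟩
    have := U.inter_mem h h2
    rcases U.nonempty_of_mem this with ⟨i, hi1, hi2⟩
    exact absurd hi2 (not_le_of_gt hi1)

instance : IsOrderedMonoid (UProd U Γ) where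
  mul_le_mul_left := by
    refine UProd.ind fun a => UProd.ind fun b => ?_
    intro h
    refine UProd.ind fun c => ?_
    simp only [UProd.mk_le_mk, UProd.mk_mul] at h ⊢
    exact U.mem_of_superset h fun i hi => mul_le_mul_left hi _

end UP

/-- A subset `S ⊆ R × R` is admissible if there exist a linearly ordered abelian group
`Γ` and a homomorphism `v : R → Γ_max` (with `Γ_max = WithZero Γ`, addition being `max`)
such that `v y < v x` for all `(x, y) ∈ S`. -/
def IsAdmissible {R : Type u} [CommSemiring R] (S : Set (R × R)) : Prop :=
  ∃ (Γ : Type u) (_ : CommGroup Γ) (_ : LinearOrder Γ) (_ : IsOrderedMonoid Γ) (v : R → WithZero Γ),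
    v 0 = 0 ∧ v 1 = 1 ∧ (∀ a b, v (a * b) = v a * v b) ∧
    (∀ a b, v (a + b) = max (v a) (v b)) ∧
    ∀ p ∈ S, v p.2 < v p.1

/-- Let `R` be an idempotent semiring and `S ⊆ R × R`.  If every finite
subset of `S` is admissible, then `S` is admissible. -/
theorem statement16 {R : Type u} [CommSemiring R]
    (hidem : ∀ x : R, x + x = x)
    (S : Set (R × R))
    (hfin : ∀ T ⊆ S, T.Finite → IsAdmissible T) :
    IsAdmissible S := by
  classical
  have key : ∀ i : {T : Finset (R × R) // ↑T ⊆ S}, IsAdmissible (↑i.1 : Set (R × R)) :=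
    fun i => hfin _ i.2 i.1.finite_toSet
  choose Γ inst instL instO v h0 h1 hmul hadd hlt using key
  letI := inst
  letI := instL
  letI := instO
  -- an ultrafilter containing, for each `p ∈ S`, the set of finite subsets containing `p`
  obtain ⟨U, hU⟩ : ∃ U : Ultrafilter {T : Finset (R × R) // ↑T ⊆ S},
      ((fun p => {i : {T : Finset (R × R) // ↑T ⊆ S} | p ∈ i.1}) '' S) ⊆ U.sets := by
    apply Ultrafilter.exists_ultrafilter_of_finite_inter_nonempty
    intro T hT
    have hch : ∀ x ∈ T, ∃ p, p ∈ S ∧ {i : {T : Finset (R × R) // ↑T ⊆ S} | p ∈ i.1} = x := by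
      intro x hx
      obtain ⟨p, hp, hpx⟩ := hT hx
      exact ⟨p, hp, hpx⟩
    choose g hg1 hg2 using hch
    refine ⟨⟨T.attach.image fun x => g x.1 x.2, ?_⟩, ?_⟩
    · intro p hp
      simp only [Finset.coe_image, Set.mem_image, Finset.mem_coe, Finset.mem_attach] at hp
      obtain ⟨x, -, rfl⟩ := hp
      exact hg1 _ _
    · intro x hx
      rw [← hg2 x hx]
      simp only [Set.mem_setOf_eq]
      exact Finset.mem_image.2 ⟨⟨x, hx⟩, Finset.mem_attach _ _, rfl⟩
  -- the valuation into the ultraproduct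
  let f : R → ∀ i, Γ i := fun r i => if h : v i r = 0 then 1 else WithZero.unzero h
  have hf : ∀ r i, v i r ≠ 0 → ((f r i : Γ i) : WithZero (Γ i)) = v i r := by
    intro r i h
    simp only [f, dif_neg h, WithZero.coe_unzero]
  let V : R → WithZero (UProd U Γ) := fun r =>
    if {i | v i r = 0} ∈ U then 0 else ↑(UProd.mk (U := U) (f r))
  have hV0 : ∀ r, {i | v i r = 0} ∈ U → V r = 0 := fun r h => if_pos h
  have hVc : ∀ r, {i | v i r = 0} ∉ U → V r = ↑(UProd.mk (U := U) (f r)) :=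
    fun r h => if_neg h
  -- congruence
  have hVeq : ∀ a b : R, {i | v i a = v i b} ∈ U → V a = V b := by
    intro a b h
    by_cases ha : {i | v i a = 0} ∈ U
    · have hb : {i | v i b = 0} ∈ U :=
        U.mem_of_superset (U.inter_mem h ha) fun i ⟨h1, h2⟩ => by
          simp only [Set.mem_setOf_eq] at *; rw [← h1]; exact h2
      rw [hV0 a ha, hV0 b hb]
    · have hb : {i | v i b = 0} ∉ U := by
        intro hb
        exact ha <| U.mem_of_superset (U.inter_mem h hb) fun i ⟨h1, h2⟩ => by
          simp only [Set.mem_setOf_eq] at *; rw [h1]; exact h2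
      rw [hVc a ha, hVc b hb]
      congr 1
      apply UProd.sound
      have hac := Ultrafilter.compl_mem_iff_notMem.2 ha
      refine U.mem_of_superset (U.inter_mem h hac) fun i ⟨h1, h2⟩ => ?_
      simp only [Set.mem_setOf_eq, Set.mem_compl_iff] at *
      have hbne : v i b ≠ 0 := by rw [← h1]; exact h2
      apply WithZero.coe_inj.mp
      rw [hf a i h2, hf b i hbne, h1]
  -- monotonicity
  have hVle : ∀ a b : R, {i | v i a ≤ v i b} ∈ U → V a ≤ V b := by
    intro a b h
    by_cases ha : {i | v i a = 0} ∈ U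
    · rw [hV0 a ha]; exact zero_le'
    · have hb : {i | v i b = 0} ∉ U := by
        intro hb
        exact ha <| U.mem_of_superset (U.inter_mem h hb) fun i ⟨h1, h2⟩ => by
          simp only [Set.mem_setOf_eq] at *
          exact le_zero_iff.mp (h2 ▸ h1)
      rw [hVc a ha, hVc b hb]
      rw [WithZero.coe_le_coe, UProd.mk_le_mk]
      have hac := Ultrafilter.compl_mem_iff_notMem.2 ha
      have hbc := Ultrafilter.compl_mem_iff_notMem.2 hb
      refine U.mem_of_superset (U.inter_mem h (U.inter_mem hac hbc))
        fun i ⟨h1, h2, h3⟩ => ?_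
      simp only [Set.mem_setOf_eq, Set.mem_compl_iff] at *
      rw [← WithZero.coe_le_coe, hf a i h2, hf b i h3]
      exact h1
  refine ⟨UProd U Γ, inferInstance, inferInstance, inferInstance, V, ?_, ?_, ?_, ?_, ?_⟩
  · -- V 0 = 0
    apply hV0
    have : {i | v i (0 : R) = 0} = Set.univ := Set.eq_univ_of_forall fun i => h0 i
    rw [this]; exact U.univ_mem
  · -- V 1 = 1
    have hne : {i | v i (1 : R) = 0} ∉ U := by
      have : {i | v i (1 : R) = 0} = ∅ := by
        ext i
        simp only [Set.mem_setOf_eq, Set.mem_empty_iff_false, iff_false, h1 i]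
        exact one_ne_zero
      rw [this]; exact U.empty_notMem
    rw [hVc 1 hne]
    have : UProd.mk (U := U) (f 1) = 1 := by
      apply UProd.sound'
      intro i
      apply WithZero.coe_inj.mp
      rw [hf 1 i (by rw [h1 i]; exact one_ne_zero), h1 i, WithZero.coe_one]
    rw [this, WithZero.coe_one]
  · -- multiplicative
    intro a b
    by_cases ha : {i | v i a = 0} ∈ U
    · rw [hV0 a ha, zero_mul]
      apply hV0
      refine U.mem_of_superset ha fun i hi => ?_
      simp only [Set.mem_setOf_eq] at *
      rw [hmul i a b, hi, zero_mul]
    · by_cases hb : {i | v i b = 0} ∈ U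
      · rw [hV0 b hb, mul_zero]
        apply hV0
        refine U.mem_of_superset hb fun i hi => ?_
        simp only [Set.mem_setOf_eq] at *
        rw [hmul i a b, hi, mul_zero]
      · have hac := Ultrafilter.compl_mem_iff_notMem.2 ha
        have hbc := Ultrafilter.compl_mem_iff_notMem.2 hb
        have hab : {i | v i (a * b) = 0} ∉ U := by
          rw [← Ultrafilter.compl_mem_iff_notMem]
          refine U.mem_of_superset (U.inter_mem hac hbc) fun i ⟨h2, h3⟩ => ?_
          simp only [Set.mem_setOf_eq, Set.mem_compl_iff] at *
          rw [hmul i a b]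
          exact mul_ne_zero h2 h3
        rw [hVc a ha, hVc b hb, hVc _ hab, ← WithZero.coe_mul, WithZero.coe_inj,
          UProd.mk_mul]
        apply UProd.sound
        refine U.mem_of_superset (U.inter_mem hac hbc) fun i ⟨h2, h3⟩ => ?_
        simp only [Set.mem_setOf_eq, Set.mem_compl_iff] at *
        apply WithZero.coe_inj.mp
        rw [hf _ i (by rw [hmul i a b]; exact mul_ne_zero h2 h3), WithZero.coe_mul,
          hf a i h2, hf b i h3, hmul i a b]
  · -- additive (max)
    intro a b
    rcases U.em {i | v i a ≤ v i b} with h | h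
    · have h1' : V (a + b) = V b := by
        apply hVeq
        refine U.mem_of_superset h fun i hi => ?_
        simp only [Set.mem_setOf_eq] at *
        rw [hadd i a b, max_eq_right hi]
      have h2' : V a ≤ V b := hVle a b h
      rw [h1', max_eq_right h2']
    · have h' : {i | v i b ≤ v i a} ∈ U :=
        U.mem_of_superset h fun i hi => le_of_not_ge hi
      have h1' : V (a + b) = V a := by
        apply hVeq
        refine U.mem_of_superset h' fun i hi => ?_
        simp only [Set.mem_setOf_eq] at *
        rw [hadd i a b, max_eq_left hi]
      have h2' : V b ≤ V a := hVle b a h'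
      rw [h1', max_eq_left h2']
  · -- strict inequalities
    intro p hp
    have hUp : {i : {T : Finset (R × R) // (T : Set (R × R)) ⊆ S} | p ∈ i.1} ∈ U :=
      hU (Set.mem_image_of_mem _ hp)
    have hlt' : ∀ i, p ∈ i.1 → v i p.2 < v i p.1 := by
      intro i hi
      exact hlt i p hi
    have h1ne : {i | v i p.1 = 0} ∉ U := by
      rw [← Ultrafilter.compl_mem_iff_notMem]
      refine U.mem_of_superset hUp fun i hi => ?_
      simp only [Set.mem_setOf_eq, Set.mem_compl_iff] at *
      exact (lt_of_le_of_lt zero_le' (hlt' i hi)).ne'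
    rw [hVc _ h1ne]
    by_cases h2 : {i | v i p.2 = 0} ∈ U
    · rw [hV0 _ h2]
      exact WithZero.zero_lt_coe _
    · rw [hVc _ h2, WithZero.coe_lt_coe, UProd.mk_lt_mk]
      have h2c := Ultrafilter.compl_mem_iff_notMem.2 h2
      refine U.mem_of_superset (U.inter_mem hUp h2c) fun i ⟨hi1, hi2⟩ => ?_
      simp only [Set.mem_setOf_eq, Set.mem_compl_iff] at *
      rw [← WithZero.coe_lt_coe (α := Γ i), hf _ i hi2,
        hf _ i (lt_of_le_of_lt zero_le' (hlt' i hi1)).ne']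
      exact hlt' i hi1
end

section
/- Let K be a totally ordered idempotent semifield and L an idempotent semifield, and let f : K → L be an injective semiring homomorphism. Then there exist a linearly ordered abelian group Δ and a homomorphism v : L → Δ_max such that the composite v ∘ f : K → Δ_max is injective. -/
universe u v

namespace S17

/-! ### General lattice-ordered commutative group lemmas -/

section LGroup

variable {α : Type*} [CommGroup α] [Lattice α]
  [CovariantClass α α (· * ·) (· ≤ ·)]

lemma inf_mul_le_mul_inf (a x y : α) (ha : 1 ≤ a) (hx : 1 ≤ x) (hy : 1 ≤ y) :
    a ⊓ (x * y) ≤ (a ⊓ x) * (a ⊓ y) := by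
  rw [inf_mul, mul_inf, mul_inf]
  refine le_inf (le_inf ?_ ?_) (le_inf ?_ ?_)
  · exact inf_le_left.trans (le_mul_of_one_le_right' ha)
  · exact inf_le_left.trans (le_mul_of_one_le_right' hy)
  · exact inf_le_left.trans (le_mul_of_one_le_left' hx)
  · exact inf_le_right

lemma eq_one_of_mabs_eq_one {a : α} (h : |a|ₘ = 1) : a = 1 := by
  have h1 : a ≤ 1 := le_sup_left.trans_eq h
  have h2 : a⁻¹ ≤ 1 := le_sup_right.trans_eq h
  exact le_antisymm h1 (by rwa [inv_le_one'] at h2)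

lemma inf_pow_eq_one (a b : α) (ha : 1 ≤ a) (hb : 1 ≤ b) (h : a ⊓ b = 1) (m : ℕ) :
    a ⊓ b ^ m = 1 := by
  induction m with
  | zero => rw [pow_zero]; exact inf_eq_right.2 ha
  | succ n ih =>
      have h2 := inf_mul_le_mul_inf a (b ^ n) b ha (one_le_pow_of_one_le' hb n) hb
      rw [ih, h, one_mul] at h2
      rw [pow_succ]
      exact le_antisymm h2 (le_inf ha (one_le_pow_of_one_le' hb (n + 1) |>.trans_eq
        (by rw [pow_succ])))

lemma pow_inf_pow_le (a b : α) (ha : 1 ≤ a) (hb : 1 ≤ b) (n m : ℕ) :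
    a ^ n ⊓ b ^ m ≤ (a ⊓ b) ^ (n + m) := by
  set c := a ⊓ b with hc
  have hc1 : 1 ≤ c := le_inf ha hb
  have ha' : 1 ≤ a / c := one_le_div'.mpr inf_le_left
  have hb' : 1 ≤ b / c := one_le_div'.mpr inf_le_right
  have hinf : (a / c) ⊓ (b / c) = 1 := by
    rw [← inf_div, ← hc, div_self']
  have h1 : (a / c) ^ n ⊓ (b / c) ^ m = 1 := by
    have hn : (b / c) ⊓ (a / c) ^ n = 1 :=
      inf_pow_eq_one _ _ hb' ha' (by rw [inf_comm]; exact hinf) n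
    have := inf_pow_eq_one ((a / c) ^ n) (b / c)
      (one_le_pow_of_one_le' ha' n) hb' (by rw [inf_comm]; exact hn) m
    exact this
  have key1 : a ^ n ≤ c ^ (n + m) * (a / c) ^ n := by
    have hae : a ^ n = c ^ n * (a / c) ^ n := by
      rw [← mul_pow, mul_div_cancel]
    rw [hae]
    exact mul_le_mul_left (pow_le_pow_right' hc1 (Nat.le_add_right n m)) _
  have key2 : b ^ m ≤ c ^ (n + m) * (b / c) ^ m := by
    have hbe : b ^ m = c ^ m * (b / c) ^ m := by
      rw [← mul_pow, mul_div_cancel]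
    rw [hbe]
    exact mul_le_mul_left (pow_le_pow_right' hc1 (Nat.le_add_left m n)) _
  calc a ^ n ⊓ b ^ m ≤ (c ^ (n + m) * (a / c) ^ n) ⊓ (c ^ (n + m) * (b / c) ^ m) :=
        inf_le_inf key1 key2
    _ = c ^ (n + m) * ((a / c) ^ n ⊓ (b / c) ^ m) := (mul_inf _ _ _).symm
    _ = c ^ (n + m) := by rw [h1, mul_one]

lemma oneLePart_mul_le (x y : α) : (x * y)⁺ᵐ ≤ x⁺ᵐ * y⁺ᵐ := by
  rw [oneLePart_def]
  exact sup_le (mul_le_mul' (le_oneLePart x) (le_oneLePart y))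
    (one_le_mul (one_le_oneLePart x) (one_le_oneLePart y))

end LGroup

/-! ### Idempotent semifields -/

class ISF (L : Type*) extends CommSemiring L, Nontrivial L where
  idem : ∀ x : L, x + x = x
  unitss : ∀ x : L, x ≠ 0 → IsUnit x

variable {L : Type v} [ISF L]

lemma add_unit_ne_zero (a b : Lˣ) : ((a : L) + b) ≠ 0 := by
  intro h
  have h1 : (a : L) + ((a : L) + b) = (a : L) + 0 := by rw [h]
  rw [← add_assoc, ISF.idem, h, add_zero] at h1
  exact a.ne_zero h1.symm

instance : PartialOrder Lˣ where
  le a b := (a : L) + b = b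
  le_refl a := ISF.idem _
  le_trans a b c hab hbc := by
    show (a : L) + c = c
    conv_lhs => rw [← hbc, ← add_assoc, hab]
    exact hbc
  le_antisymm a b hab hba := by
    refine Units.ext ?_
    calc (a : L) = (b : L) + a := hba.symm
      _ = (a : L) + b := add_comm _ _
      _ = b := hab

lemma le_iff {a b : Lˣ} : a ≤ b ↔ (a : L) + b = b := Iff.rfl

instance : CovariantClass Lˣ Lˣ (· * ·) (· ≤ ·) :=
  ⟨by
    intro c a b h
    show ((c * a : Lˣ) : L) + ((c * b : Lˣ) : L) = ((c * b : Lˣ) : L)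
    rw [Units.val_mul, Units.val_mul, ← mul_add, le_iff.mp h]⟩

instance : CovariantClass Lˣ Lˣ (Function.swap (· * ·)) (· ≤ ·) :=
  ⟨by
    intro c a b h
    show ((a * c : Lˣ) : L) + ((b * c : Lˣ) : L) = ((b * c : Lˣ) : L)
    rw [Units.val_mul, Units.val_mul, ← add_mul, le_iff.mp h]⟩

noncomputable def usup (a b : Lˣ) : Lˣ := (ISF.unitss _ (add_unit_ne_zero a b)).unit

lemma usup_coe (a b : Lˣ) : ((usup a b : Lˣ) : L) = (a : L) + b := IsUnit.unit_spec _

noncomputable instance : Lattice Lˣ where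
  sup := usup
  le_sup_left a b := by
    show (a : L) + usup a b = usup a b
    rw [usup_coe, ← add_assoc, ISF.idem]
  le_sup_right a b := by
    show (b : L) + usup a b = usup a b
    rw [usup_coe, add_comm (a : L) (b : L), ← add_assoc, ISF.idem]
  sup_le a b c hac hbc := by
    show ((usup a b : Lˣ) : L) + c = c
    rw [usup_coe, add_assoc, le_iff.mp hbc]
    exact hac
  inf a b := a * b * (usup a b)⁻¹
  inf_le_left a b := by
    rw [← mul_le_mul_iff_right (usup a b), inv_mul_cancel_right]
    show ((a * b : Lˣ) : L) + ((a * usup a b : Lˣ) : L) = ((a * usup a b : Lˣ) : L)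
    rw [Units.val_mul, Units.val_mul, ← mul_add, usup_coe,
      add_comm (a : L) (b : L), ← add_assoc, ISF.idem]
  inf_le_right a b := by
    rw [← mul_le_mul_iff_right (usup a b), inv_mul_cancel_right]
    show ((a * b : Lˣ) : L) + ((b * usup a b : Lˣ) : L) = ((b * usup a b : Lˣ) : L)
    rw [Units.val_mul, Units.val_mul, ← mul_comm (b : L) (a : L), ← mul_add, usup_coe,
      ← add_assoc, ISF.idem]
  le_inf c a b hca hcb := by
    rw [← mul_le_mul_iff_right (usup a b)]
    have : c * usup a b ≤ a * b := by
      show ((c * usup a b : Lˣ) : L) + ((a * b : Lˣ) : L) = ((a * b : Lˣ) : L)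
      rw [Units.val_mul, Units.val_mul, usup_coe, mul_add]
      calc (c : L) * a + (c : L) * b + (a : L) * b
          = (c : L) * a + (((c : L) + a) * b) := by rw [add_mul, add_assoc]
        _ = (c : L) * a + (a : L) * b := by rw [le_iff.mp hca]
        _ = (a : L) * ((c : L) + b) := by rw [mul_comm (c : L) (a : L), ← mul_add]
        _ = (a : L) * b := by rw [le_iff.mp hcb]
    rwa [inv_mul_cancel_right]

lemma coe_sup (a b : Lˣ) : ((a ⊔ b : Lˣ) : L) = (a : L) + b := usup_coe a b

end S17

open S17

/-- Key construction: quotient of `Lˣ` by a prime convex ℓ-subgroup avoiding `S`. -/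
theorem S17.main {L : Type v} [ISF L] (S : Set Lˣ) (hS1 : ∀ s ∈ S, (1 : Lˣ) ≤ s)
    (hS0 : (1 : Lˣ) ∉ S) (hSinf : ∀ s ∈ S, ∀ t ∈ S, s ⊓ t ∈ S) :
    ∃ (Δ : Type v) (_ : CommGroup Δ) (_ : LinearOrder Δ) (_ : IsOrderedMonoid Δ) (w : Lˣ →* Δ),
      (∀ a b : Lˣ, w (a ⊔ b) = max (w a) (w b)) ∧ (∀ u : Lˣ, |u|ₘ ∈ S → w u ≠ 1) := by
  classical
  -- the family of convex ℓ-subgroups (as sets) avoiding S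
  set 𝒜 : Set (Set Lˣ) :=
    {A | (1 : Lˣ) ∈ A ∧ (∀ a ∈ A, ∀ b ∈ A, a * b ∈ A) ∧ (∀ a ∈ A, a⁻¹ ∈ A) ∧
      (∀ a ∈ A, ∀ x : Lˣ, |x|ₘ ≤ |a|ₘ → x ∈ A) ∧ ∀ s ∈ S, s ∉ A} with h𝒜
  have hbot : ({1} : Set Lˣ) ∈ 𝒜 := by
    refine ⟨rfl, ?_, ?_, ?_, ?_⟩
    · rintro a rfl b rfl; simp
    · rintro a rfl; simp
    · rintro a rfl x hx
      simp only [mabs_one] at hx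
      have : |x|ₘ = 1 := le_antisymm hx (one_le_mabs x)
      simpa using eq_one_of_mabs_eq_one this
    · rintro s hs rfl; exact hS0 hs
  obtain ⟨H0, -, hmax⟩ := zorn_subset_nonempty 𝒜 (by
    intro c hc hchain hcne
    refine ⟨⋃₀ c, ⟨?_, ?_, ?_, ?_, ?_⟩, fun s hs => Set.subset_sUnion_of_mem hs⟩
    · obtain ⟨A, hA⟩ := hcne
      exact ⟨A, hA, (hc hA).1⟩
    · rintro a ⟨A, hA, ha⟩ b ⟨B, hB, hb⟩
      rcases hchain.total hA hB with h | h
      · exact ⟨B, hB, (hc hB).2.1 a (h ha) b hb⟩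
      · exact ⟨A, hA, (hc hA).2.1 a ha b (h hb)⟩
    · rintro a ⟨A, hA, ha⟩
      exact ⟨A, hA, (hc hA).2.2.1 a ha⟩
    · rintro a ⟨A, hA, ha⟩ x hx
      exact ⟨A, hA, (hc hA).2.2.2.1 a ha x hx⟩
    · rintro s hs ⟨A, hA, ha⟩
      exact (hc hA).2.2.2.2 s hs ha) {1} hbot
  obtain ⟨⟨h1H, hmulH, hinvH, hconvH, hdisjH⟩, hmaximal⟩ := hmax
  set H : Subgroup Lˣ :=
    { carrier := H0
      one_mem' := h1H
      mul_mem' := fun {a b} ha hb => hmulH a ha b hb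
      inv_mem' := fun {a} ha => hinvH a ha } with hH
  have hmemH : ∀ {x : Lˣ}, x ∈ H ↔ x ∈ H0 := fun {x} => Iff.rfl
  -- convexity in convenient form
  have hconv : ∀ a ∈ H, ∀ x : Lˣ, |x|ₘ ≤ |a|ₘ → x ∈ H := fun a ha x hx => hconvH a ha x hx
  -- primality
  have hprime : ∀ a b : Lˣ, 1 ≤ a → 1 ≤ b → a ⊓ b ∈ H → a ∈ H ∨ b ∈ H := by
    intro a b ha hb hab
    by_contra hcon
    push_neg at hcon
    obtain ⟨haH, hbH⟩ := hcon
    -- the enlargement by an element g ∉ H meets S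
    have key : ∀ g : Lˣ, 1 ≤ g → g ∉ H →
        ∃ s ∈ S, ∃ h ∈ H, 1 ≤ h ∧ ∃ n : ℕ, s ≤ h * g ^ n := by
      intro g hg hgH
      set E : Set Lˣ := {x | ∃ h ∈ H0, ∃ n : ℕ, |x|ₘ ≤ |h|ₘ * g ^ n} with hE
      have hsub : H0 ⊆ E := fun x hx => ⟨x, hx, 0, by rw [pow_zero, mul_one]⟩
      have hgE : g ∈ E := ⟨1, h1H, 1, by
        rw [mabs_one, one_mul, pow_one, mabs_of_one_le hg]⟩
      rcases Classical.em (∀ s ∈ S, s ∉ E) with hdisj | hdisj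
      · -- then E ∈ 𝒜 contradicting maximality
        have hEA : E ∈ 𝒜 := by
          refine ⟨hsub h1H, ?_, ?_, ?_, hdisj⟩
          · rintro x ⟨hx, hxH, n, hxn⟩ y ⟨hy, hyH, m, hym⟩
            refine ⟨|hx|ₘ * |hy|ₘ, hmulH _ (hconvH hx hxH _ (mabs_mabs hx).le) _
              (hconvH hy hyH _ (mabs_mabs hy).le), n + m, ?_⟩
            have h1 : |x * y|ₘ ≤ |x|ₘ * |y|ₘ := mabs_mul_le x y
            have h2 : |x|ₘ * |y|ₘ ≤ (|hx|ₘ * g ^ n) * (|hy|ₘ * g ^ m) :=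
              mul_le_mul' hxn hym
            have h3 : (|hx|ₘ * g ^ n) * (|hy|ₘ * g ^ m) = (|hx|ₘ * |hy|ₘ) * g ^ (n + m) := by
              rw [mul_mul_mul_comm, ← pow_add]
            have h4 : mabs (|hx|ₘ * |hy|ₘ) = |hx|ₘ * |hy|ₘ :=
              mabs_of_one_le (one_le_mul (one_le_mabs _) (one_le_mabs _))
            rw [h4]
            exact h1.trans (h2.trans_eq h3)
          · rintro x ⟨hx, hxH, n, hxn⟩
            exact ⟨hx, hxH, n, by rwa [mabs_inv]⟩
          · rintro x ⟨hx, hxH, n, hxn⟩ y hy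
            exact ⟨hx, hxH, n, hy.trans hxn⟩
        have := hmaximal hEA hsub
        exact (hgH (hmemH.mpr (this hgE))).elim
      · push_neg at hdisj
        obtain ⟨s, hsS, hsE⟩ := hdisj
        obtain ⟨h, hhH, n, hsn⟩ := hsE
        refine ⟨s, hsS, |h|ₘ, hconvH h hhH _ (mabs_mabs h).le, one_le_mabs h, n, ?_⟩
        rwa [mabs_of_one_le (hS1 s hsS)] at hsn
    obtain ⟨s, hsS, h1, h1H', h1pos, n, hs⟩ := key a ha haH
    obtain ⟨t, htS, h2, h2H', h2pos, m, ht⟩ := key b hb hbH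
    have hstS : s ⊓ t ∈ S := hSinf s hsS t htS
    have hle : s ⊓ t ≤ (h1 * h2) * (a ⊓ b) ^ (n + m) := by
      have e1 : s ≤ (h1 * h2) * a ^ n :=
        hs.trans (mul_le_mul_left (le_mul_of_one_le_right' h2pos) _)
      have e2 : t ≤ (h1 * h2) * b ^ m :=
        ht.trans (mul_le_mul_left (le_mul_of_one_le_left' h1pos) _)
      calc s ⊓ t ≤ ((h1 * h2) * a ^ n) ⊓ ((h1 * h2) * b ^ m) := inf_le_inf e1 e2
        _ = (h1 * h2) * (a ^ n ⊓ b ^ m) := (mul_inf _ _ _).symm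
        _ ≤ (h1 * h2) * (a ⊓ b) ^ (n + m) :=
            mul_le_mul_right (pow_inf_pow_le a b ha hb n m) _
    have hmem : s ⊓ t ∈ H := by
      refine hconv ((h1 * h2) * (a ⊓ b) ^ (n + m)) ?_ (s ⊓ t) ?_
      · exact mul_mem (mul_mem h1H' h2H') (pow_mem hab _)
      · have hpos1 : (1 : Lˣ) ≤ s ⊓ t := le_inf (hS1 s hsS) (hS1 t htS)
        have hpos2 : (1 : Lˣ) ≤ (h1 * h2) * (a ⊓ b) ^ (n + m) :=
          one_le_mul (one_le_mul h1pos h2pos)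
            (one_le_pow_of_one_le' (le_inf ha hb) _)
        rw [mabs_of_one_le hpos1, mabs_of_one_le hpos2]
        exact hle
    exact hdisjH _ hstS hmem
  -- shift invariance of positive parts modulo H
  have haux : ∀ x p : Lˣ, p ∈ H → x⁺ᵐ ∈ H → (x * p)⁺ᵐ ∈ H := by
    intro x p hp hx
    refine hconv (x⁺ᵐ * |p|ₘ) (mul_mem hx (hconv p hp _ (mabs_mabs p).le)) _ ?_
    have h1 : (1 : Lˣ) ≤ (x * p)⁺ᵐ := one_le_oneLePart _
    have h2 : (1 : Lˣ) ≤ x⁺ᵐ * |p|ₘ := one_le_mul (one_le_oneLePart x) (one_le_mabs p)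
    rw [mabs_of_one_le h1, mabs_of_one_le h2, oneLePart_def]
    exact sup_le (mul_le_mul' (le_oneLePart x) (le_mabs_self p)) h2
  have hshift : ∀ x p : Lˣ, p ∈ H → ((x * p)⁺ᵐ ∈ H ↔ x⁺ᵐ ∈ H) := by
    intro x p hp
    constructor
    · intro h
      have := haux (x * p) p⁻¹ (inv_mem hp) h
      rwa [mul_inv_cancel_right] at this
    · exact haux x p hp
  -- the quotient
  set Δ := Lˣ ⧸ H with hΔ
  set q : Lˣ →* Δ := QuotientGroup.mk' H with hq
  have hqsurj : Function.Surjective q := QuotientGroup.mk'_surjective H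
  set le : Δ → Δ → Prop :=
    fun x y => ∃ g h : Lˣ, q g = x ∧ q h = y ∧ (g / h)⁺ᵐ ∈ H with hle
  have le_mk : ∀ g h : Lˣ, (le (q g) (q h) ↔ (g / h)⁺ᵐ ∈ H) := by
    intro g h
    constructor
    · rintro ⟨g', h', hg', hh', hmem⟩
      obtain ⟨z, hz, rfl⟩ := (QuotientGroup.mk'_eq_mk' (N := H)).mp hg'
      obtain ⟨z', hz', rfl⟩ := (QuotientGroup.mk'_eq_mk' (N := H)).mp hh'
      have heq : (g' * z) / (h' * z') = (g' / h') * (z / z') := mul_div_mul_comm g' z h' z'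
      rw [heq, div_eq_mul_inv z z']
      exact (hshift _ _ (mul_mem hz (inv_mem hz'))).mpr hmem
    · intro hmem
      exact ⟨g, h, rfl, rfl, hmem⟩
  have le_refl' : ∀ x : Δ, le x x := by
    intro x
    obtain ⟨g, rfl⟩ := hqsurj x
    rw [le_mk]
    rw [div_self', oneLePart_one]
    exact one_mem H
  have le_trans' : ∀ x y z : Δ, le x y → le y z → le x z := by
    intro x y z hxy hyz
    obtain ⟨g, rfl⟩ := hqsurj x
    obtain ⟨h, rfl⟩ := hqsurj y
    obtain ⟨k, rfl⟩ := hqsurj z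
    rw [le_mk] at hxy hyz ⊢
    have heq : g / k = (g / h) * (h / k) := by
      rw [mul_comm]; exact (div_mul_div_cancel' h k g).symm
    refine hconv ((g / h)⁺ᵐ * (h / k)⁺ᵐ) (mul_mem hxy hyz) _ ?_
    have h1 : (1 : Lˣ) ≤ (g / k)⁺ᵐ := one_le_oneLePart _
    have h2 : (1 : Lˣ) ≤ (g / h)⁺ᵐ * (h / k)⁺ᵐ :=
      one_le_mul (one_le_oneLePart _) (one_le_oneLePart _)
    rw [mabs_of_one_le h1, mabs_of_one_le h2, heq]
    exact oneLePart_mul_le _ _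
  have le_antisymm' : ∀ x y : Δ, le x y → le y x → x = y := by
    intro x y hxy hyx
    obtain ⟨g, rfl⟩ := hqsurj x
    obtain ⟨h, rfl⟩ := hqsurj y
    rw [le_mk] at hxy hyx
    have hneg : (g / h)⁻ᵐ = (h / g)⁺ᵐ := by
      rw [leOnePart_def, oneLePart_def, inv_div]
    have hdiv : g / h ∈ H := by
      have := div_mem hxy (hneg ▸ hyx : (g / h)⁻ᵐ ∈ H)
      rwa [oneLePart_div_leOnePart] at this
    show QuotientGroup.mk g = QuotientGroup.mk h
    rw [QuotientGroup.eq]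
    have : (g / h)⁻¹ ∈ H := inv_mem hdiv
    rwa [inv_div, div_eq_mul_inv, mul_comm] at this
  have le_total' : ∀ x y : Δ, le x y ∨ le y x := by
    intro x y
    obtain ⟨g, rfl⟩ := hqsurj x
    obtain ⟨h, rfl⟩ := hqsurj y
    rw [le_mk, le_mk]
    have hneg : (h / g)⁺ᵐ = (g / h)⁻ᵐ := by
      rw [leOnePart_def, oneLePart_def, inv_div]
    rw [hneg]
    refine hprime _ _ (one_le_oneLePart _) (one_le_leOnePart _) ?_
    rw [oneLePart_inf_leOnePart_eq_one]
    exact one_mem H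
  have le_mul : ∀ x y z : Δ, le x y → le (z * x) (z * y) := by
    intro x y z hxy
    obtain ⟨g, rfl⟩ := hqsurj x
    obtain ⟨h, rfl⟩ := hqsurj y
    obtain ⟨k, rfl⟩ := hqsurj z
    rw [le_mk] at hxy
    rw [← map_mul, ← map_mul, le_mk]
    rwa [mul_div_mul_left_eq_div]
  letI instPO : PartialOrder Δ :=
    { le := le
      le_refl := le_refl'
      le_trans := le_trans'
      le_antisymm := le_antisymm' }
  letI instLO : LinearOrder Δ :=
    { instPO with
      le_total := le_total'
      toDecidableLE := Classical.decRel _ }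
  haveI instLOCG : IsOrderedMonoid Δ :=
    { mul_le_mul_left := fun a b hab c => by
        rw [mul_comm a c, mul_comm b c]; exact le_mul a b c hab
      mul_le_mul_right := fun a b hab c => le_mul a b c hab }
  have mk_sup : ∀ a b : Lˣ, (a / b)⁺ᵐ ∈ H → q (a ⊔ b) = q b := by
    intro a b hab
    have h1 : ((a ⊔ b) / b)⁺ᵐ ∈ H := by
      have e : ((a ⊔ b) / b)⁺ᵐ = (a / b)⁺ᵐ := by
        rw [oneLePart_def, oneLePart_def, sup_div, div_self', sup_assoc, sup_idem]
      rw [e]; exact hab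
    have h2 : ((b / (a ⊔ b)))⁺ᵐ ∈ H := by
      rw [oneLePart_eq_one.mpr (div_le_one'.mpr le_sup_right)]
      exact one_mem H
    exact le_antisymm' _ _ ((le_mk _ _).mpr h1) ((le_mk _ _).mpr h2)
  refine ⟨Δ, inferInstance, instLO, instLOCG, q, ?_, ?_⟩
  · intro a b
    rcases le_total' (q a) (q b) with h | h
    · have hmax : max (q a) (q b) = q b := max_eq_right h
      rw [hmax]
      exact mk_sup a b ((le_mk a b).mp h)
    · have hmax : max (q a) (q b) = q a := max_eq_left h
      rw [hmax, sup_comm]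
      exact mk_sup b a ((le_mk b a).mp h)
  · intro u hu hq1
    have huH : u ∈ H := (QuotientGroup.eq_one_iff u).mp hq1
    have : |u|ₘ ∈ H := hconv u huH _ (mabs_mabs u).le
    exact hdisjH _ hu this

/-- Let `K` be a totally ordered idempotent semifield and `L` an
idempotent semifield, with `f : K → L` an injective semiring homomorphism.  Then there
exist a linearly ordered abelian group `Δ` and a homomorphism `v : L → Δ_max` (with
`Δ_max = WithZero Δ`, addition being `max`) such that `v ∘ f` is injective. -/
theorem statement17 {K : Type u} {L : Type v} [CommSemiring K] [CommSemiring L]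
    [Nontrivial K] [Nontrivial L]
    (hKidem : ∀ x : K, x + x = x) (hLidem : ∀ x : L, x + x = x)
    (hKunits : ∀ x : K, x ≠ 0 → IsUnit x) (hLunits : ∀ x : L, x ≠ 0 → IsUnit x)
    (hKtotal : ∀ x y : K, x + y = y ∨ x + y = x)
    (f : K →+* L) (hf : Function.Injective f) :
    ∃ (Δ : Type v) (_ : CommGroup Δ) (_ : LinearOrder Δ) (_ : IsOrderedMonoid Δ) (v : L → WithZero Δ),
      v 0 = 0 ∧ v 1 = 1 ∧ (∀ a b, v (a * b) = v a * v b) ∧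
      (∀ a b, v (a + b) = max (v a) (v b)) ∧
      Function.Injective fun x : K => v (f x) := by
  classical
  letI : ISF L := { idem := hLidem, unitss := hLunits }
  -- the image subgroup
  set T : Set Lˣ := {w : Lˣ | ∃ x : K, (w : L) = f x} with hT
  have hf0 : ∀ x : K, f x = 0 → x = 0 := by
    intro x hx
    apply hf
    rw [hx, map_zero]
  have hTinv : ∀ w : Lˣ, w ∈ T → (w⁻¹ : Lˣ) ∈ T := by
    rintro w ⟨x, hx⟩
    have hx0 : x ≠ 0 := by
      intro h
      exact w.ne_zero (by rw [hx, h, map_zero])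
    obtain ⟨xu, hxu⟩ := hKunits x hx0
    refine ⟨(xu⁻¹ : Kˣ), ?_⟩
    have h1 : (w : L) * f (xu⁻¹ : Kˣ) = 1 := by
      rw [hx, ← map_mul, ← hxu, Units.mul_inv, map_one]
    calc ((w⁻¹ : Lˣ) : L) = ((w⁻¹ : Lˣ) : L) * ((w : L) * f (xu⁻¹ : Kˣ)) := by
          rw [h1, mul_one]
      _ = (((w⁻¹ : Lˣ) : L) * (w : L)) * f (xu⁻¹ : Kˣ) := by rw [mul_assoc]
      _ = f (xu⁻¹ : Kˣ) := by rw [Units.inv_mul, one_mul]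
  have hTsup : ∀ w w' : Lˣ, w ∈ T → w' ∈ T → (w ⊔ w' : Lˣ) ∈ T := by
    rintro w w' ⟨x, hx⟩ ⟨x', hx'⟩
    exact ⟨x + x', by rw [coe_sup, hx, hx', map_add]⟩
  have hTmul : ∀ w w' : Lˣ, w ∈ T → w' ∈ T → (w * w' : Lˣ) ∈ T := by
    rintro w w' ⟨x, hx⟩ ⟨x', hx'⟩
    exact ⟨x * x', by rw [Units.val_mul, hx, hx', map_mul]⟩
  have hTcomp : ∀ w w' : Lˣ, w ∈ T → w' ∈ T → w ≤ w' ∨ w' ≤ w := by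
    rintro w w' ⟨x, hx⟩ ⟨x', hx'⟩
    rcases hKtotal x x' with h | h
    · left
      show (w : L) + w' = w'
      rw [hx, hx', ← map_add, h]
    · right
      show (w' : L) + w = w
      rw [hx, hx', ← map_add, add_comm, h]
  have hTmabs : ∀ w : Lˣ, w ∈ T → |w|ₘ ∈ T := by
    intro w hw
    have : |w|ₘ = w ⊔ w⁻¹ := rfl
    rw [this]
    exact hTsup _ _ hw (hTinv w hw)
  -- the avoided set
  set S : Set Lˣ := {s : Lˣ | ∃ u : Lˣ, u ≠ 1 ∧ u ∈ T ∧ s = |u|ₘ} with hS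
  have hS1 : ∀ s ∈ S, (1 : Lˣ) ≤ s := by
    rintro s ⟨u, -, -, rfl⟩
    exact one_le_mabs u
  have hS0 : (1 : Lˣ) ∉ S := by
    rintro ⟨u, hu, -, h⟩
    exact hu (eq_one_of_mabs_eq_one h.symm)
  have hSmemT : ∀ s ∈ S, s ∈ T := by
    rintro s ⟨u, -, hu, rfl⟩
    exact hTmabs u hu
  have hSinf : ∀ s ∈ S, ∀ t ∈ S, s ⊓ t ∈ S := by
    intro s hs t ht
    rcases hTcomp s t (hSmemT s hs) (hSmemT t ht) with h | h
    · rwa [inf_eq_left.mpr h]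
    · rwa [inf_eq_right.mpr h]
  obtain ⟨Δ, inst, instLO, instOM, w, hsup, hne⟩ := S17.main S hS1 hS0 hSinf
  letI := inst
  letI := instLO
  haveI := instOM
  -- the valuation
  set v : L → WithZero Δ :=
    fun x => if h : x = 0 then 0 else ((w ((hLunits x h).unit) : Δ) : WithZero Δ) with hv
  have hvne : ∀ (x : L) (h : x ≠ 0), v x = ((w ((hLunits x h).unit) : Δ) : WithZero Δ) :=
    fun x h => dif_neg h
  have hv0 : v 0 = 0 := dif_pos rfl
  refine ⟨Δ, inst, instLO, instOM, v, ?_, ?_, ?_, ?_, ?_⟩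
  · exact hv0
  · rw [hvne 1 one_ne_zero]
    have : (hLunits (1 : L) one_ne_zero).unit = 1 :=
      Units.ext (by rw [IsUnit.unit_spec, Units.val_one])
    rw [this, map_one, WithZero.coe_one]
  · intro a b
    by_cases ha : a = 0
    · rw [ha, zero_mul, hv0, zero_mul]
    by_cases hb : b = 0
    · rw [hb, mul_zero, hv0, mul_zero]
    have hab : a * b ≠ 0 := by
      intro h
      apply hb
      have h1 : (((hLunits a ha).unit⁻¹ : Lˣ) : L) * (a * b) = b := by
        rw [← mul_assoc]
        have h2 : (((hLunits a ha).unit⁻¹ : Lˣ) : L) * a = 1 := by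
          have h3 := Units.inv_mul (hLunits a ha).unit
          rwa [IsUnit.unit_spec] at h3
        rw [h2, one_mul]
      rw [← h1, h, mul_zero]
    rw [hvne _ hab, hvne _ ha, hvne _ hb, ← WithZero.coe_mul, ← map_mul]
    congr 2
    exact Units.ext (by
      rw [IsUnit.unit_spec, Units.val_mul, IsUnit.unit_spec, IsUnit.unit_spec])
  · intro a b
    by_cases ha : a = 0
    · rw [ha, zero_add, hv0]
      exact (max_eq_right (WithZero.zero_le _)).symm
    by_cases hb : b = 0
    · rw [hb, add_zero, hv0]
      exact (max_eq_left (WithZero.zero_le _)).symm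
    have hab : a + b ≠ 0 := by
      have := add_unit_ne_zero (hLunits a ha).unit (hLunits b hb).unit
      rwa [IsUnit.unit_spec, IsUnit.unit_spec] at this
    rw [hvne _ hab, hvne _ ha, hvne _ hb]
    have hu : (hLunits (a + b) hab).unit = (hLunits a ha).unit ⊔ (hLunits b hb).unit :=
      Units.ext (by
        rw [IsUnit.unit_spec, coe_sup, IsUnit.unit_spec, IsUnit.unit_spec])
    rw [hu, hsup]
    rcases le_total (w (hLunits a ha).unit) (w (hLunits b hb).unit) with h | h
    · rw [max_eq_right h, max_eq_right (WithZero.coe_le_coe.mpr h)]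
    · rw [max_eq_left h, max_eq_left (WithZero.coe_le_coe.mpr h)]
  · intro x y hxy
    simp only at hxy
    by_cases hx : x = 0
    · by_cases hy : y = 0
      · rw [hx, hy]
      · exfalso
        have hfx : f x = 0 := by rw [hx, map_zero]
        have hfy : f y ≠ 0 := fun h => hy (hf0 y h)
        rw [hfx, hv0, hvne _ hfy] at hxy
        exact WithZero.coe_ne_zero hxy.symm
    · by_cases hy : y = 0
      · exfalso
        have hfy : f y = 0 := by rw [hy, map_zero]
        have hfx : f x ≠ 0 := fun h => hx (hf0 x h)
        rw [hfy, hv0, hvne _ hfx] at hxy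
        exact WithZero.coe_ne_zero hxy
      · have hfx : f x ≠ 0 := fun h => hx (hf0 x h)
        have hfy : f y ≠ 0 := fun h => hy (hf0 y h)
        rw [hvne _ hfx, hvne _ hfy] at hxy
        have hw : w ((hLunits (f x) hfx).unit) = w ((hLunits (f y) hfy).unit) :=
          WithZero.coe_inj.mp hxy
        set ux := (hLunits (f x) hfx).unit with hux
        set uy := (hLunits (f y) hfy).unit with huy
        by_cases huxy : ux = uy
        · apply hf
          rw [← (hLunits (f x) hfx).unit_spec, ← (hLunits (f y) hfy).unit_spec, ← hux, ← huy,
            huxy]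
        · exfalso
          have hdivT : ux / uy ∈ T := by
            rw [div_eq_mul_inv]
            refine hTmul _ _ ⟨x, (hLunits (f x) hfx).unit_spec⟩ (hTinv _ ⟨y, (hLunits (f y) hfy).unit_spec⟩)
          have hdivne : ux / uy ≠ 1 := by
            intro h
            exact huxy (div_eq_one.mp h)
          have : |ux / uy|ₘ ∈ S := ⟨ux / uy, hdivne, hdivT, rfl⟩
          apply hne _ this
          rw [map_div, hw, div_self']
end
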